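/- arXiv:0911.2292 — 3 statements merged into one kernel-verified Lean document; each statement's English description precedes it below -/
import Mathlib

section
/- Let n and k̄ be positive integers with n > 2k̄, and let S be a uniformly random subset of [0,n] containing 0 and n. Then P([k̄+1, 2n−k̄−1] ⊄ S+S) ≤ (3/4)^{k̄/2} / (1 − √3/2), and P([−n+k̄+1, n−k̄−1] ⊄ S−S) ≤ 2·(3/4)^{k̄} + (n+1)·(3/4)^{(n−1)/3}. -/
open Finset Filter Pointwise
open scoped Classical

/-- `n - S = {n - s : s ∈ S}`. -/
def mirror (n : ℕ) (S : Finset ℤ) : Finset ℤ := S.image (fun s => (n : ℤ) - s)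

/-- Probability that a uniformly random subset of `[0,n]` satisfies `P`. -/
noncomputable def prAll (n : ℕ) (P : Finset ℤ → Prop) : ℝ :=
  (((Finset.Icc (0:ℤ) n).powerset.filter P).card : ℝ) / 2 ^ (n + 1)

/-- Probability w.r.t. the uniform distribution on subsets of `[0,n]` containing `0` and `n`. -/
noncomputable def pr0n (n : ℕ) (P : Finset ℤ → Prop) : ℝ :=
  (((Finset.Icc (0:ℤ) n).powerset.filter
      (fun S => (0:ℤ) ∈ S ∧ (n:ℤ) ∈ S ∧ P S)).card : ℝ) / 2 ^ (n - 1)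

/-- A finite set of integers is MSTD if it has more sums than differences. -/
def IsMSTD (S : Finset ℤ) : Prop := (S - S).card < (S + S).card

/-- Probability that a uniformly random subset of `[0,n]` is MSTD. -/
noncomputable def rhoN (n : ℕ) : ℝ := prAll n IsMSTD

/-- The pair (number of missing sums, number of missing differences) of `S ⊆ [0,n]`. -/
def lam (n : ℕ) (S : Finset ℤ) : ℕ × ℕ :=
  (2 * n + 1 - (S + S).card, 2 * n + 1 - (S - S).card)

/-- Probability that a uniformly random subset of `[0,n]` satisfies `lam n S ∈ Λ`. -/
noncomputable def rhoL (Λ : Set (ℕ × ℕ)) (n : ℕ) : ℝ := prAll n (fun S => lam n S ∈ Λ)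

/-- An MSTD fringe pair of order `k`. -/
def IsFringePair (A B : Finset ℤ) (k : ℕ) : Prop :=
  A ⊆ Finset.Icc (0:ℤ) k ∧ B ⊆ Finset.Icc (0:ℤ) k ∧ (0:ℤ) ∈ A ∧ (0:ℤ) ∈ B ∧
    2 * ((A + B) ∩ Finset.Icc (0:ℤ) k).card <
      ((A + A) ∩ Finset.Icc (0:ℤ) k).card + ((B + B) ∩ Finset.Icc (0:ℤ) k).card

/-- `S ⊆ [0,n]` is a rich MSTD set with MSTD fringe pair `(A, B; k)`. -/
def IsRichWith (n : ℕ) (S A B : Finset ℤ) (k : ℕ) : Prop :=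
  IsFringePair A B k ∧ 2 * k < n ∧ S ∩ Finset.Icc (0:ℤ) k = A ∧
    mirror n S ∩ Finset.Icc (0:ℤ) k = B ∧
    Finset.Icc ((k:ℤ) + 1) (2 * n - k - 1) ⊆ S + S

/-- The strict partial order on MSTD fringe pairs: `(A', B'; k') < (A, B; k)`. -/
def FringeLt (A' B' : Finset ℤ) (k' : ℕ) (A B : Finset ℤ) (k : ℕ) : Prop :=
  IsFringePair A' B' k' ∧ IsFringePair A B k ∧ k' < k ∧
    A' = A ∩ Finset.Icc (0:ℤ) k' ∧ B' = B ∩ Finset.Icc (0:ℤ) k' ∧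
    Finset.Icc ((k':ℤ) + 1) k ⊆ A + A ∧ Finset.Icc ((k':ℤ) + 1) k ⊆ B + B

/-- A minimal MSTD fringe pair. -/
def MinimalFringePair (A B : Finset ℤ) (k : ℕ) : Prop :=
  IsFringePair A B k ∧ ¬ ∃ A' B' k', FringeLt A' B' k' A B k

/-- `σ_n(A; k)`: probability that a uniform random `T ⊆ [0,n]` is `k`-semi-rich with
prefix `(A; k)`. -/
noncomputable def sigmaN (A : Finset ℤ) (k n : ℕ) : ℝ :=
  (((Finset.Icc (0:ℤ) n).powerset.filter
      (fun T => T ∩ Finset.Icc (0:ℤ) k = A ∧ Finset.Icc ((k:ℤ) + 1) n ⊆ T + T)).card : ℝ) / 2 ^ n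

/-- `ρ_n(A, B; k) = 2^{-n+1} · #{S ⊆ [0,n] : S ∩ [0,k] = A, (n−S) ∩ [0,k] = B,
[k+1, 2n−k−1] ⊆ S+S}`. -/
noncomputable def rhoABn (A B : Finset ℤ) (k n : ℕ) : ℝ :=
  2 * (((Finset.Icc (0:ℤ) n).powerset.filter
      (fun S => S ∩ Finset.Icc (0:ℤ) k = A ∧ mirror n S ∩ Finset.Icc (0:ℤ) k = B ∧
        Finset.Icc ((k:ℤ) + 1) (2 * n - k - 1) ⊆ S + S)).card : ℝ) / 2 ^ n

/-- `ρ_{*n} = 2^{-n+1} · #{S ⊆ [0,n] : 0, n ∈ S and S is MSTD}`. -/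
noncomputable def rhoStarN (n : ℕ) : ℝ :=
  2 * (((Finset.Icc (0:ℤ) n).powerset.filter
      (fun S => (0:ℤ) ∈ S ∧ (n:ℤ) ∈ S ∧ IsMSTD S)).card : ℝ) / 2 ^ n

/-- `G_j(A; k) = #{T ⊆ [0,j] : T ∩ [0,k] = A, [k+1,j−1] ⊆ T+T, j ∉ T+T}`. -/
noncomputable def G (A : Finset ℤ) (k j : ℕ) : ℕ :=
  ((Finset.Icc (0:ℤ) j).powerset.filter
      (fun T => T ∩ Finset.Icc (0:ℤ) k = A ∧
        Finset.Icc ((k:ℤ) + 1) ((j:ℤ) - 1) ⊆ T + T ∧ (j:ℤ) ∉ T + T)).card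

/-- `S ⊆ [0,n]` is `k`-affluent. -/
def Affluent (n k : ℕ) (S : Finset ℤ) : Prop :=
  Finset.Icc ((k:ℤ) + 1) (2 * n - k - 1) ⊆ S + S ∧
    Finset.Icc (-(n:ℤ) + k + 1) ((n:ℤ) - k - 1) ⊆ S - S

/-- `μ_n(A, B; k)`: probability that a uniform random `S ⊆ [0,n]` is `k`-affluent
with fringe pair `(A, B; k)`. -/
noncomputable def muN (A B : Finset ℤ) (k n : ℕ) : ℝ :=
  prAll n (fun S => S ∩ Finset.Icc (0:ℤ) k = A ∧ mirror n S ∩ Finset.Icc (0:ℤ) k = B ∧ Affluent n k S)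

/-- The strict partial order on general fringe pairs. -/
def GFringeLt (A' B' : Finset ℤ) (k' : ℕ) (A B : Finset ℤ) (k : ℕ) : Prop :=
  A' ⊆ Finset.Icc (0:ℤ) k' ∧ B' ⊆ Finset.Icc (0:ℤ) k' ∧ A ⊆ Finset.Icc (0:ℤ) k ∧ B ⊆ Finset.Icc (0:ℤ) k ∧
    k' < k ∧ A' = A ∩ Finset.Icc (0:ℤ) k' ∧ B' = B ∩ Finset.Icc (0:ℤ) k' ∧
    Finset.Icc ((k':ℤ) + 1) k ⊆ A + A ∧ Finset.Icc ((k':ℤ) + 1) k ⊆ B + B ∧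
    Finset.Icc ((k':ℤ) + 1) k ⊆ A + B

/-- A minimal general fringe pair. -/
def GMinimal (A B : Finset ℤ) (k : ℕ) : Prop :=
  A ⊆ Finset.Icc (0:ℤ) k ∧ B ⊆ Finset.Icc (0:ℤ) k ∧ ¬ ∃ A' B' k', GFringeLt A' B' k' A B k

/-- `λ(A, B; k)` for a general fringe pair. -/
noncomputable def lamPair (A B : Finset ℤ) (k : ℕ) : ℕ × ℕ :=
  (2 * (k + 1) - ((A + A) ∩ Finset.Icc (0:ℤ) k).card - ((B + B) ∩ Finset.Icc (0:ℤ) k).card,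
   2 * (k + 1 - ((A + B) ∩ Finset.Icc (0:ℤ) k).card))

private lemma MM_wt_nonneg (Q : Finset ℤ) : 0 ≤ 1 - (1/2:ℝ)^Q.card := by
  have : (1/2:ℝ)^Q.card ≤ 1 := pow_le_one₀ (by norm_num) (by norm_num)
  linarith

private lemma MM_listprod_nonneg (l : List (Finset ℤ)) :
    0 ≤ (l.map (fun Q => 1 - (1/2:ℝ)^Q.card)).prod := by
  apply List.prod_nonneg
  intro x hx
  simp only [List.mem_map] at hx
  obtain ⟨Q, _, rfl⟩ := hx
  exact MM_wt_nonneg Q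

private lemma MM_lemA : ∀ (Qs : List (Finset ℤ)) (X : Finset ℤ),
    (∀ Q ∈ Qs, Q ⊆ X) → Qs.Pairwise Disjoint →
    (((X.powerset.filter (fun T => ∀ Q ∈ Qs, ¬ Q ⊆ T)).card : ℝ))
      ≤ (Qs.map (fun Q => 1 - (1/2:ℝ)^Q.card)).prod * 2 ^ X.card := by
  intro Qs
  induction Qs with
  | nil =>
      intro X _ _
      simp only [List.not_mem_nil, false_implies, implies_true, Finset.filter_true_of_mem,
        Finset.card_powerset, List.map_nil, List.prod_nil, one_mul]
      norm_num
  | cons Q Qs ih =>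
      intro X hQ hpair
      have hQX : Q ⊆ X := hQ Q (by simp)
      set E₂ := ((X \ Q).powerset.filter (fun T => ∀ Q' ∈ Qs, ¬ Q' ⊆ T)) with hE₂
      have hstep : (X.powerset.filter (fun T => ∀ Q' ∈ Q :: Qs, ¬ Q' ⊆ T)).card
          ≤ ((Q.powerset.erase Q) ×ˢ E₂).card := by
        apply Finset.card_le_card_of_injOn (fun T => (T ∩ Q, T \ Q))
        · intro T hT
          simp only [mem_coe, mem_filter, mem_powerset, List.mem_cons] at hT
          obtain ⟨hTX, hcons⟩ := hT
          have h1 : ¬ Q ⊆ T := hcons Q (Or.inl rfl)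
          simp only [hE₂, mem_coe, mem_product, mem_erase, mem_powerset, mem_filter]
          refine ⟨⟨?_, inter_subset_right⟩, ?_, ?_⟩
          · intro hEq
            exact h1 (by rw [← hEq]; exact inter_subset_left)
          · exact sdiff_subset_sdiff hTX (Finset.Subset.refl Q)
          · intro Q' hQ' hsub
            exact (hcons Q' (Or.inr hQ')) (hsub.trans sdiff_subset)
        · intro T₁ h₁ T₂ h₂ hEq
          have h1 : T₁ ∩ Q = T₂ ∩ Q := congrArg Prod.fst hEq
          have h2 : T₁ \ Q = T₂ \ Q := congrArg Prod.snd hEq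
          have := congrArg₂ (· ∪ ·) h1 h2
          simpa only [← Finset.sup_eq_union, ← Finset.inf_eq_inter, sup_inf_sdiff] using this
      have hcardprod : ((Q.powerset.erase Q) ×ˢ E₂).card = (2^Q.card - 1) * E₂.card := by
        rw [Finset.card_product, Finset.card_erase_of_mem (Finset.mem_powerset_self Q),
          Finset.card_powerset]
      have hQsub : ∀ Q' ∈ Qs, Q' ⊆ X \ Q := by
        intro Q' h
        exact Finset.subset_sdiff.2 ⟨hQ Q' (by simp [h]),
          ((List.pairwise_cons.1 hpair).1 Q' h).symm⟩
      have hih := ih (X \ Q) hQsub (List.pairwise_cons.1 hpair).2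
      have hXcard : (X \ Q).card + Q.card = X.card := Finset.card_sdiff_add_card_eq_card hQX
      have h2pow : (1:ℕ) ≤ 2^Q.card := Nat.one_le_two_pow
      have hkey : ((2^Q.card - 1 : ℕ) : ℝ) = (1 - (1/2:ℝ)^Q.card) * 2^Q.card := by
        push_cast [h2pow]
        have : (1/2:ℝ)^Q.card * 2^Q.card = 1 := by
          rw [← mul_pow]; norm_num
        ring_nf
        linarith [this]
      calc ((X.powerset.filter (fun T => ∀ Q' ∈ Q :: Qs, ¬ Q' ⊆ T)).card : ℝ)
          ≤ ((2^Q.card - 1 : ℕ) : ℝ) * (E₂.card : ℝ) := by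
            rw [← Nat.cast_mul, ← hcardprod]; exact_mod_cast hstep
        _ ≤ ((2^Q.card - 1 : ℕ) : ℝ) *
              ((Qs.map (fun Q => 1 - (1/2:ℝ)^Q.card)).prod * 2 ^ (X \ Q).card) := by
            apply mul_le_mul_of_nonneg_left hih
            positivity
        _ = ((Q :: Qs).map (fun Q => 1 - (1/2:ℝ)^Q.card)).prod * 2 ^ X.card := by
            rw [hkey, List.map_cons, List.prod_cons, ← hXcard, pow_add]
            ring


lemma MM_pr0n_le (n : ℕ) (hn : 1 ≤ n) (E : Finset ℤ → Prop) (Qs : List (Finset ℤ))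
    (hQ : ∀ Q ∈ Qs, Q ⊆ Finset.Icc (0:ℤ) n \ {0, (n:ℤ)})
    (hpair : Qs.Pairwise Disjoint)
    (himp : ∀ S : Finset ℤ, (0:ℤ) ∈ S → (n:ℤ) ∈ S → E S → ∀ Q ∈ Qs, ¬ Q ⊆ S) :
    pr0n n E ≤ (Qs.map (fun Q => 1 - (1/2:ℝ)^Q.card)).prod := by
  set F : Finset ℤ := {0, (n:ℤ)} with hF
  set X : Finset ℤ := Finset.Icc (0:ℤ) n \ F with hX
  have hFsub : F ⊆ Finset.Icc (0:ℤ) n := by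
    intro x hx
    simp only [hF, mem_insert, mem_singleton] at hx
    rcases hx with rfl | rfl <;> simp [Finset.mem_Icc] <;> positivity
  have hFcard : F.card = 2 := by
    have h0n : (0:ℤ) ≠ (n:ℤ) := by exact_mod_cast (Nat.one_le_iff_ne_zero.1 hn).symm ∘ (by exact_mod_cast ·)
    rw [hF, Finset.card_insert_of_notMem (by simpa using h0n), Finset.card_singleton]
  have hXcard : X.card = n - 1 := by
    rw [hX, Finset.card_sdiff_of_subset hFsub, hFcard, Int.card_Icc]
    omega
  have hstep : ((Finset.Icc (0:ℤ) n).powerset.filter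
      (fun S => (0:ℤ) ∈ S ∧ (n:ℤ) ∈ S ∧ E S)).card
      ≤ (X.powerset.filter (fun T => ∀ Q ∈ Qs, ¬ Q ⊆ T)).card := by
    apply Finset.card_le_card_of_injOn (fun S => S \ F)
    · intro S hS
      simp only [mem_coe, mem_filter, mem_powerset] at hS
      obtain ⟨hSsub, h0, hnn, hE⟩ := hS
      simp only [mem_coe, mem_filter, mem_powerset, hX]
      refine ⟨sdiff_subset_sdiff hSsub (Finset.Subset.refl F), ?_⟩
      intro Q hQ' hsub
      exact himp S h0 hnn hE Q hQ' (hsub.trans sdiff_subset)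
    · intro S₁ h₁ S₂ h₂ hEq
      simp only [mem_coe, mem_filter, mem_powerset] at h₁ h₂
      have hF₁ : F ⊆ S₁ := by
        intro x hx; simp only [hF, mem_insert, mem_singleton] at hx
        rcases hx with rfl | rfl; exacts [h₁.2.1, h₁.2.2.1]
      have hF₂ : F ⊆ S₂ := by
        intro x hx; simp only [hF, mem_insert, mem_singleton] at hx
        rcases hx with rfl | rfl; exacts [h₂.2.1, h₂.2.2.1]
      have := congrArg (· ∪ F) hEq
      simpa only [Finset.sdiff_union_of_subset hF₁, Finset.sdiff_union_of_subset hF₂] using this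
  have hA := MM_lemA Qs X (by intro Q h; exact hQ Q h) hpair
  rw [hXcard] at hA
  have h2 : (0:ℝ) < 2 ^ (n-1) := by positivity
  rw [pr0n, div_le_iff₀ h2]
  calc (((Finset.Icc (0:ℤ) n).powerset.filter
      (fun S => (0:ℤ) ∈ S ∧ (n:ℤ) ∈ S ∧ E S)).card : ℝ)
      ≤ ((X.powerset.filter (fun T => ∀ Q ∈ Qs, ¬ Q ⊆ T)).card : ℝ) := by exact_mod_cast hstep
    _ ≤ (Qs.map (fun Q => 1 - (1/2:ℝ)^Q.card)).prod * 2 ^ (n-1) := hA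


lemma MM_pr0n_eq_zero (n : ℕ) (P : Finset ℤ → Prop)
    (h : ∀ S : Finset ℤ, (0:ℤ) ∈ S → (n:ℤ) ∈ S → ¬ P S) : pr0n n P = 0 := by
  have hempty : ((Finset.Icc (0:ℤ) n).powerset.filter
      (fun S => (0:ℤ) ∈ S ∧ (n:ℤ) ∈ S ∧ P S)) = ∅ := by
    apply Finset.filter_eq_empty_iff.2
    intro S _
    rintro ⟨h0, hnn, hP⟩
    exact h S h0 hnn hP
  rw [pr0n, hempty]
  simp

private lemma MM_prod_map_le (f : ℕ → ℝ) (c : ℝ) (hc : 0 ≤ c) :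
    ∀ (l : List ℕ), (∀ x ∈ l, 0 ≤ f x ∧ f x ≤ c) → (l.map f).prod ≤ c ^ l.length := by
  intro l
  induction l with
  | nil => simp
  | cons a l ih =>
      intro h
      simp only [List.map_cons, List.prod_cons, List.length_cons, pow_succ]
      have h1 := h a (by simp)
      have h2 : (l.map f).prod ≤ c ^ l.length := ih (fun x hx => h x (by simp [hx]))
      have h3 : 0 ≤ (l.map f).prod := List.prod_nonneg (by
        intro x hx
        simp only [List.mem_map] at hx
        obtain ⟨y, hy, rfl⟩ := hx
        exact (h y (by simp [hy])).1)
      calc f a * (l.map f).prod ≤ c * c ^ l.length := by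
            apply mul_le_mul h1.2 h2 h3 hc
        _ = c ^ l.length * c := by ring

private lemma MM_prod_map_nonneg (f : ℕ → ℝ) (l : List ℕ) (h : ∀ x ∈ l, 0 ≤ f x) :
    0 ≤ (l.map f).prod := by
  apply List.prod_nonneg
  intro x hx
  simp only [List.mem_map] at hx
  obtain ⟨y, hy, rfl⟩ := hx
  exact h y hy

private lemma MM_wt_le (Q : Finset ℤ) (h : Q.card ≤ 2) : 1 - (1/2:ℝ)^Q.card ≤ 3/4 := by
  have : (1/2:ℝ)^2 ≤ (1/2:ℝ)^Q.card := pow_le_pow_of_le_one (by norm_num) (by norm_num) h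
  norm_num at this ⊢
  linarith

private lemma MM_card_pair_sdiff_le (x y : ℤ) (F : Finset ℤ) : (({x, y} : Finset ℤ) \ F).card ≤ 2 :=
  (Finset.card_le_card sdiff_subset).trans ((Finset.card_insert_le x {y}).trans (by simp))

lemma MM_sum_event (n k i : ℕ) (hk : 1 ≤ k) (hn : 2*k < n) (h1 : k+1 ≤ i) (h2 : i ≤ 2*n - k - 1) :
    pr0n n (fun S => (i:ℤ) ∉ S + S) ≤ (1/2) * (3/4:ℝ)^(min i (2*n-i)/2) := by
  by_cases hin : i = n
  · -- probability is zero
    rw [MM_pr0n_eq_zero n _ (fun S h0 hnn hE =>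
      hE (by subst hin; simpa using Finset.add_mem_add h0 hnn))]
    positivity
  · set c := min i (2*n-i)/2 with hc
    set lo := i - n with hlo
    set Qf : ℕ → Finset ℤ := fun t =>
      ({((lo + t : ℕ) : ℤ), ((i:ℤ) - ((lo + t : ℕ) : ℤ))} : Finset ℤ) \ {0, (n:ℤ)} with hQf
    have hcb : 2*c ≤ min i (2*n-i) ∧ min i (2*n-i) ≤ 2*c + 1 := by
      constructor <;> omega
    have hkey : ∀ t, t ≤ c → 2*(lo + t) ≤ i := by omega
    have hmain := MM_pr0n_le n (by omega) (fun S => (i:ℤ) ∉ S + S)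
      ((List.range (c+1)).map Qf) ?_ ?_ ?_
    · refine hmain.trans ?_
      rw [List.map_map, List.range_succ_eq_map, List.map_cons, List.prod_cons, List.map_map]
      have hcard0 : (Qf 0).card = 1 := by
        rcases Nat.lt_or_ge i n with hlt | hge
        · have : Qf 0 = {(i:ℤ)} := by
            ext a
            simp only [hQf, hlo, Finset.mem_sdiff, mem_insert, mem_singleton]
            omega
          rw [this]; simp
        · have hgt : n < i := by omega
          have : Qf 0 = {((i - n : ℕ) : ℤ)} := by
            ext a
            simp only [hQf, hlo, Finset.mem_sdiff, mem_insert, mem_singleton]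
            omega
          rw [this]; simp
      have hw0 : (fun Q => 1 - (1/2:ℝ)^Q.card) (Qf 0) = 1/2 := by
        simp only [hcard0, pow_one]
        norm_num
      have hrest : ((List.range c).map ((fun Q => 1 - (1/2:ℝ)^Q.card) ∘ Qf ∘ Nat.succ)).prod
          ≤ (3/4) ^ c := by
        have := MM_prod_map_le ((fun Q => 1 - (1/2:ℝ)^Q.card) ∘ Qf ∘ Nat.succ) (3/4) (by norm_num)
          (List.range c) ?_
        · simpa using this
        · intro x _
          constructor
          · simp only [Function.comp_apply]
            exact MM_wt_nonneg _
          · simp only [Function.comp_apply]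
            exact MM_wt_le _ (by apply MM_card_pair_sdiff_le)
      have hrestnn : 0 ≤ ((List.range c).map ((fun Q => 1 - (1/2:ℝ)^Q.card) ∘ Qf ∘ Nat.succ)).prod := by
        apply MM_prod_map_nonneg
        intro x _
        simp only [Function.comp_apply]
        exact MM_wt_nonneg _
      calc (fun Q => 1 - (1/2:ℝ)^Q.card) (Qf 0) *
            ((List.range c).map ((fun Q => 1 - (1/2:ℝ)^Q.card) ∘ Qf ∘ Nat.succ)).prod
          ≤ (1/2) * (3/4)^c := by
            rw [hw0]
            apply mul_le_mul_of_nonneg_left hrest (by norm_num)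
        _ = (1/2) * (3/4:ℝ)^c := rfl
    · -- subsets
      intro Q hQ
      simp only [List.mem_map, List.mem_range] at hQ
      obtain ⟨t, ht, rfl⟩ := hQ
      apply sdiff_subset_sdiff ?_ (Finset.Subset.refl _)
      intro a ha
      simp only [mem_insert, mem_singleton] at ha
      have h2t : 2*(lo + t) ≤ i := hkey t (by omega)
      simp only [Finset.mem_Icc]
      rcases ha with rfl | rfl <;> constructor <;> omega
    · -- pairwise disjoint
      rw [List.pairwise_map]
      apply List.Pairwise.imp_of_mem ?_ (List.pairwise_lt_range (n := (c+1)))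
      intro a b ha hb hab
      rw [List.mem_range] at ha hb
      refine Disjoint.mono sdiff_subset sdiff_subset ?_
      rw [Finset.disjoint_left]
      intro z hz hz'
      simp only [mem_insert, mem_singleton] at hz hz'
      have h2a := hkey a (by omega)
      have h2b := hkey b (by omega)
      omega
    · -- implication
      intro S h0 hnn hE Q hQ hsub
      simp only [List.mem_map, List.mem_range] at hQ
      obtain ⟨t, ht, rfl⟩ := hQ
      have hmem : ∀ z ∈ ({((lo + t : ℕ) : ℤ), ((i:ℤ) - ((lo + t : ℕ) : ℤ))} : Finset ℤ), z ∈ S := by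
        intro z hz
        by_cases hzF : z ∈ ({0, (n:ℤ)} : Finset ℤ)
        · simp only [mem_insert, mem_singleton] at hzF
          rcases hzF with rfl | rfl; exacts [h0, hnn]
        · exact hsub (Finset.mem_sdiff.2 ⟨hz, hzF⟩)
      have hx : ((lo + t : ℕ) : ℤ) ∈ S := hmem _ (by simp)
      have hy : ((i:ℤ) - ((lo + t : ℕ) : ℤ)) ∈ S := hmem _ (by simp)
      exact hE (by simpa using Finset.add_mem_add hx hy)


lemma MM_diff_large (n k e : ℕ) (hk : 1 ≤ k) (hn : 2*k < n) (h2e : n < 2*e)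
    (he2 : e ≤ n - k - 1) :
    pr0n n (fun S => ((e:ℕ):ℤ) ∉ S - S) ≤ (1/4) * (3/4:ℝ)^(n-e-1) := by
  set Qf : ℕ → Finset ℤ := fun a =>
    ({(a : ℤ), ((a + e : ℕ) : ℤ)} : Finset ℤ) \ {0, (n:ℤ)} with hQf
  set m := n - e - 1 with hm
  have hM : n - e + 1 = m + 2 := by omega
  have hmain := MM_pr0n_le n (by omega) (fun S => ((e:ℕ):ℤ) ∉ S - S)
    ((List.range (n-e+1)).map Qf) ?_ ?_ ?_
  · refine hmain.trans ?_
    rw [List.map_map, hM, List.range_succ_eq_map, List.range_succ, List.map_cons,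
      List.map_map, List.map_append, List.prod_cons, List.prod_append]
    have hw0 : ((fun Q => 1 - (1/2:ℝ)^Q.card) ∘ Qf) 0 = 1/2 := by
      have : Qf 0 = {(e:ℤ)} := by
        ext a
        simp only [hQf, Finset.mem_sdiff, mem_insert, mem_singleton]
        omega
      simp only [Function.comp_apply, this, Finset.card_singleton, pow_one]
      norm_num
    have hwlast : (List.map (((fun Q => 1 - (1/2:ℝ)^Q.card) ∘ Qf) ∘ Nat.succ) [m]).prod = 1/2 := by
      have : Qf (m+1) = {((n - e : ℕ):ℤ)} := by
        ext a
        simp only [hQf, Finset.mem_sdiff, mem_insert, mem_singleton]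
        omega
      simp only [List.map_cons, List.map_nil, List.prod_cons, List.prod_nil, mul_one,
        Function.comp_apply, Nat.succ_eq_add_one, this, Finset.card_singleton, pow_one]
      norm_num
    have hmid : (List.map (((fun Q => 1 - (1/2:ℝ)^Q.card) ∘ Qf) ∘ Nat.succ) (List.range m)).prod
        ≤ (3/4)^m := by
      have := MM_prod_map_le (((fun Q => 1 - (1/2:ℝ)^Q.card) ∘ Qf) ∘ Nat.succ) (3/4) (by norm_num)
        (List.range m) ?_
      · simpa using this
      · intro x _
        exact ⟨MM_wt_nonneg _, MM_wt_le _ (by apply MM_card_pair_sdiff_le)⟩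
    have hmidnn : 0 ≤ (List.map (((fun Q => 1 - (1/2:ℝ)^Q.card) ∘ Qf) ∘ Nat.succ) (List.range m)).prod :=
      MM_prod_map_nonneg _ _ (fun x _ => MM_wt_nonneg _)
    rw [hw0, hwlast]
    calc (1/2:ℝ) * ((List.map (((fun Q => 1 - (1/2:ℝ)^Q.card) ∘ Qf) ∘ Nat.succ) (List.range m)).prod * (1/2))
        ≤ (1/2:ℝ) * ((3/4)^m * (1/2)) := by
          apply mul_le_mul_of_nonneg_left ?_ (by norm_num)
          apply mul_le_mul_of_nonneg_right hmid (by norm_num)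
      _ = (1/4) * (3/4:ℝ)^(n-e-1) := by rw [← hm]; ring
  · intro Q hQ
    simp only [List.mem_map, List.mem_range] at hQ
    obtain ⟨a, ha, rfl⟩ := hQ
    apply sdiff_subset_sdiff ?_ (Finset.Subset.refl _)
    intro z hz
    simp only [mem_insert, mem_singleton] at hz
    simp only [Finset.mem_Icc]
    rcases hz with rfl | rfl <;> constructor <;> omega
  · rw [List.pairwise_map]
    apply List.Pairwise.imp_of_mem ?_ (List.pairwise_lt_range (n := (n-e+1)))
    intro a b ha hb hab
    rw [List.mem_range] at ha hb
    refine Disjoint.mono sdiff_subset sdiff_subset ?_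
    rw [Finset.disjoint_left]
    intro z hz hz'
    simp only [mem_insert, mem_singleton] at hz hz'
    omega
  · intro S h0 hnn hE Q hQ hsub
    simp only [List.mem_map, List.mem_range] at hQ
    obtain ⟨a, ha, rfl⟩ := hQ
    have hmem : ∀ z ∈ ({(a : ℤ), ((a + e : ℕ) : ℤ)} : Finset ℤ), z ∈ S := by
      intro z hz
      by_cases hzF : z ∈ ({0, (n:ℤ)} : Finset ℤ)
      · simp only [mem_insert, mem_singleton] at hzF
        rcases hzF with rfl | rfl; exacts [h0, hnn]
      · exact hsub (Finset.mem_sdiff.2 ⟨hz, hzF⟩)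
    have hx : ((a:ℕ) : ℤ) ∈ S := hmem _ (by simp)
    have hy : ((a + e : ℕ) : ℤ) ∈ S := hmem _ (by simp)
    have : ((a+e:ℕ):ℤ) - (a:ℤ) ∈ S - S := Finset.sub_mem_sub hy hx
    apply hE
    have heq : ((a+e:ℕ):ℤ) - (a:ℤ) = ((e:ℕ):ℤ) := by push_cast; ring
    rwa [heq] at this

lemma MM_diff_mid1 (n e : ℕ) (h1 : 1 ≤ e) (h2 : 2*e ≤ n) :
    pr0n n (fun S => ((e:ℕ):ℤ) ∉ S - S) ≤ (3/4:ℝ)^e := by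
  set Qf : ℕ → Finset ℤ := fun a =>
    ({(a : ℤ), ((a + e : ℕ) : ℤ)} : Finset ℤ) \ {0, (n:ℤ)} with hQf
  have hmain := MM_pr0n_le n (by omega) (fun S => ((e:ℕ):ℤ) ∉ S - S)
    ((List.range e).map Qf) ?_ ?_ ?_
  · refine hmain.trans ?_
    rw [List.map_map]
    have := MM_prod_map_le ((fun Q => 1 - (1/2:ℝ)^Q.card) ∘ Qf) (3/4) (by norm_num)
      (List.range e) (fun x _ => ⟨MM_wt_nonneg _, MM_wt_le _ (by apply MM_card_pair_sdiff_le)⟩)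
    simpa using this
  · intro Q hQ
    simp only [List.mem_map, List.mem_range] at hQ
    obtain ⟨a, ha, rfl⟩ := hQ
    apply sdiff_subset_sdiff ?_ (Finset.Subset.refl _)
    intro z hz
    simp only [mem_insert, mem_singleton] at hz
    simp only [Finset.mem_Icc]
    rcases hz with rfl | rfl <;> constructor <;> omega
  · rw [List.pairwise_map]
    apply List.Pairwise.imp_of_mem ?_ (List.pairwise_lt_range (n := e))
    intro a b ha hb hab
    rw [List.mem_range] at ha hb
    refine Disjoint.mono sdiff_subset sdiff_subset ?_
    rw [Finset.disjoint_left]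
    intro z hz hz'
    simp only [mem_insert, mem_singleton] at hz hz'
    omega
  · intro S h0 hnn hE Q hQ hsub
    simp only [List.mem_map, List.mem_range] at hQ
    obtain ⟨a, ha, rfl⟩ := hQ
    have hmem : ∀ z ∈ ({(a : ℤ), ((a + e : ℕ) : ℤ)} : Finset ℤ), z ∈ S := by
      intro z hz
      by_cases hzF : z ∈ ({0, (n:ℤ)} : Finset ℤ)
      · simp only [mem_insert, mem_singleton] at hzF
        rcases hzF with rfl | rfl; exacts [h0, hnn]
      · exact hsub (Finset.mem_sdiff.2 ⟨hz, hzF⟩)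
    have hx : ((a:ℕ) : ℤ) ∈ S := hmem _ (by simp)
    have hy : ((a + e : ℕ) : ℤ) ∈ S := hmem _ (by simp)
    have hsb : ((a+e:ℕ):ℤ) - (a:ℤ) ∈ S - S := Finset.sub_mem_sub hy hx
    apply hE
    have heq : ((a+e:ℕ):ℤ) - (a:ℤ) = ((e:ℕ):ℤ) := by push_cast; ring
    rwa [heq] at hsb

private def MM_afn (e t : ℕ) : ℕ := e * (2 * (t / e)) + t % e

lemma MM_diff_mid2 (n e : ℕ) (h1 : 1 ≤ e) (h2 : 3*e ≤ n + 1) (hn : 1 ≤ n) :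
    pr0n n (fun S => ((e:ℕ):ℤ) ∉ S - S) ≤ (3/4:ℝ)^((n-e)/2 + 1) := by
  set c := (n-e)/2 + 1 with hc
  set af : ℕ → ℕ := MM_afn e with haf
  have hval : ∀ t, af t = e * (t / e) + t := by
    intro t
    have h := Nat.div_add_mod t e
    have h0 : af t = e * (2 * (t/e)) + t % e := rfl
    have h2' : e * (2 * (t/e)) = 2 * (e * (t/e)) := by ring
    omega
  have hdiv : ∀ t, af t / e = 2 * (t / e) := by
    intro t
    have h0 : af t = e * (2 * (t/e)) + t % e := rfl
    rw [h0, Nat.mul_add_div (by omega), Nat.div_eq_of_lt (Nat.mod_lt t (by omega))]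
    omega
  have hmono : ∀ a b, a < b → af a < af b := by
    intro a b hab
    have h1' : a / e ≤ b / e := Nat.div_le_div_right (le_of_lt hab)
    have ha' := hval a
    have hb' := hval b
    have h2' : e * (a/e) ≤ e * (b/e) := Nat.mul_le_mul_left e h1'
    omega
  have hbound : ∀ t, t < c → af t + e ≤ n := by
    intro t ht
    have h := hval t
    have h2' : e * (t/e) ≤ t := Nat.mul_div_le t e
    have h3' : 2 * ((n-e)/2) ≤ n - e := by omega
    omega
  set Qf : ℕ → Finset ℤ := fun a =>
    ({(a : ℤ), ((a + e : ℕ) : ℤ)} : Finset ℤ) \ {0, (n:ℤ)} with hQf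
  have hmain := MM_pr0n_le n hn (fun S => ((e:ℕ):ℤ) ∉ S - S)
    ((List.range c).map (Qf ∘ af)) ?_ ?_ ?_
  · refine hmain.trans ?_
    rw [List.map_map]
    have := MM_prod_map_le ((fun Q => 1 - (1/2:ℝ)^Q.card) ∘ (Qf ∘ af)) (3/4) (by norm_num)
      (List.range c) (fun x _ => ⟨MM_wt_nonneg _, MM_wt_le _ (by apply MM_card_pair_sdiff_le)⟩)
    simpa using this
  · intro Q hQ
    simp only [List.mem_map, List.mem_range] at hQ
    obtain ⟨t, ht, rfl⟩ := hQ
    have hb := hbound t ht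
    apply sdiff_subset_sdiff ?_ (Finset.Subset.refl _)
    intro z hz
    simp only [Function.comp_apply, mem_insert, mem_singleton] at hz
    simp only [Finset.mem_Icc]
    rcases hz with rfl | rfl <;> constructor <;> omega
  · rw [List.pairwise_map]
    apply List.Pairwise.imp_of_mem ?_ (List.pairwise_lt_range (n := c))
    intro a b ha hb hab
    rw [List.mem_range] at ha hb
    have hAB : af a < af b := hmono a b hab
    have hne : af b ≠ af a + e := by
      intro h
      have h1' : (af a + e) / e = af a / e + 1 := Nat.add_div_right _ (by omega)
      have h2' := hdiv a
      have h3' := hdiv b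
      rw [h] at h3'
      omega
    simp only [Function.comp_apply]
    refine Disjoint.mono sdiff_subset sdiff_subset ?_
    rw [Finset.disjoint_left]
    intro z hz hz'
    simp only [mem_insert, mem_singleton] at hz hz'
    omega
  · intro S h0 hnn hE Q hQ hsub
    simp only [List.mem_map, List.mem_range] at hQ
    obtain ⟨t, ht, rfl⟩ := hQ
    have hmem : ∀ z ∈ ({((af t : ℕ) : ℤ), ((af t + e : ℕ) : ℤ)} : Finset ℤ), z ∈ S := by
      intro z hz
      by_cases hzF : z ∈ ({0, (n:ℤ)} : Finset ℤ)
      · simp only [mem_insert, mem_singleton] at hzF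
        rcases hzF with rfl | rfl; exacts [h0, hnn]
      · refine hsub (Finset.mem_sdiff.2 ⟨?_, hzF⟩)
        simpa using hz
    have hx : ((af t:ℕ) : ℤ) ∈ S := hmem _ (by simp)
    have hy : ((af t + e : ℕ) : ℤ) ∈ S := hmem _ (by simp)
    have hsb : ((af t+e:ℕ):ℤ) - ((af t:ℕ):ℤ) ∈ S - S := Finset.sub_mem_sub hy hx
    apply hE
    have heq : ((af t+e:ℕ):ℤ) - ((af t:ℕ):ℤ) = ((e:ℕ):ℤ) := by push_cast; ring
    rwa [heq] at hsb


lemma MM_pr0n_union (n N : ℕ) (E : Finset ℤ → Prop) (Ei : ℕ → Finset ℤ → Prop)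
    (h : ∀ S : Finset ℤ, E S → ∃ t, t < N ∧ Ei t S) :
    pr0n n E ≤ ∑ t ∈ Finset.range N, pr0n n (Ei t) := by
  have hsub : ((Finset.Icc (0:ℤ) n).powerset.filter
      (fun S => (0:ℤ) ∈ S ∧ (n:ℤ) ∈ S ∧ E S))
      ⊆ (Finset.range N).biUnion (fun t => (Finset.Icc (0:ℤ) n).powerset.filter
        (fun S => (0:ℤ) ∈ S ∧ (n:ℤ) ∈ S ∧ Ei t S)) := by
    intro S hS
    simp only [mem_filter, mem_powerset] at hS
    obtain ⟨hSsub, h0, hnn, hE⟩ := hS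
    obtain ⟨t, ht, hEt⟩ := h S hE
    apply Finset.mem_biUnion.2
    exact ⟨t, Finset.mem_range.2 ht, Finset.mem_filter.2 ⟨Finset.mem_powerset.2 hSsub, h0, hnn, hEt⟩⟩
  have hcard := (Finset.card_le_card hsub).trans (Finset.card_biUnion_le)
  rw [pr0n]
  rw [div_le_iff₀ (by positivity : (0:ℝ) < 2^(n-1))]
  calc (((Finset.Icc (0:ℤ) n).powerset.filter
      (fun S => (0:ℤ) ∈ S ∧ (n:ℤ) ∈ S ∧ E S)).card : ℝ)
      ≤ (∑ t ∈ Finset.range N, ((Finset.Icc (0:ℤ) n).powerset.filter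
        (fun S => (0:ℤ) ∈ S ∧ (n:ℤ) ∈ S ∧ Ei t S)).card : ℕ) := by exact_mod_cast hcard
    _ = ∑ t ∈ Finset.range N, (((Finset.Icc (0:ℤ) n).powerset.filter
        (fun S => (0:ℤ) ∈ S ∧ (n:ℤ) ∈ S ∧ Ei t S)).card : ℝ) := by push_cast; rfl
    _ = ∑ t ∈ Finset.range N, pr0n n (Ei t) * 2^(n-1) := by
        apply Finset.sum_congr rfl
        intro t _
        rw [pr0n, div_mul_cancel₀]
        positivity
    _ = (∑ t ∈ Finset.range N, pr0n n (Ei t)) * 2^(n-1) := by rw [Finset.sum_mul]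

lemma MM_my_geom_le (r : ℝ) (h0 : 0 ≤ r) (h1 : r < 1) (N : ℕ) :
    ∑ t ∈ Finset.range N, r^t ≤ 1/(1-r) := by
  have hne : r ≠ 1 := ne_of_lt h1
  have heq : (r^N - 1)/(r-1) = (1-r^N)/(1-r) := by
    rw [div_eq_div_iff (by linarith) (by linarith)]
    ring
  rw [geom_sum_eq hne, heq]
  gcongr
  · have : (0:ℝ) ≤ r^N := by positivity
    linarith


lemma MM_part1 (n k : ℕ) (hk : 0 < k) (hn : 2 * k < n) :
    pr0n n (fun S => ¬ Finset.Icc ((k:ℤ) + 1) (2 * (n:ℤ) - k - 1) ⊆ S + S)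
      ≤ (3/4 : ℝ) ^ ((k:ℝ) / 2) / (1 - Real.sqrt 3 / 2) := by
  set r : ℝ := Real.sqrt 3 / 2 with hrdef
  have hr0 : 0 ≤ r := by positivity
  have hr1 : r < 1 := by
    rw [hrdef, div_lt_one (by norm_num)]
    have : Real.sqrt 3 < Real.sqrt 4 := by
      apply Real.sqrt_lt_sqrt <;> norm_num
    have h4 : Real.sqrt 4 = 2 := by
      rw [show (4:ℝ) = 2^2 by norm_num, Real.sqrt_sq (by norm_num)]
    linarith
  have hr2 : r^2 = 3/4 := by
    rw [hrdef, div_pow, Real.sq_sqrt (by norm_num)]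
    norm_num
  set T := 2*n - 2*k - 2 with hT
  have hunion := MM_pr0n_union n (T+1)
    (fun S => ¬ Finset.Icc ((k:ℤ) + 1) (2 * (n:ℤ) - k - 1) ⊆ S + S)
    (fun t S => ((k+1+t : ℕ) : ℤ) ∉ S + S) ?_
  · refine hunion.trans ?_
    have hterm : ∀ t ∈ Finset.range (T+1),
        pr0n n (fun S => ((k+1+t : ℕ) : ℤ) ∉ S + S) ≤ (1/2) * (r^k * (r^t + r^(T-t))) := by
      intro t ht
      rw [Finset.mem_range] at ht
      have hse := MM_sum_event n k (k+1+t) hk hn (by omega) (by omega)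
      refine hse.trans ?_
      have hexp : (3/4:ℝ)^(min (k+1+t) (2*n-(k+1+t))/2) ≤ r^(k + min t (T-t)) := by
        have h34 : (3/4:ℝ)^(min (k+1+t) (2*n-(k+1+t))/2)
            = r^(2 * (min (k+1+t) (2*n-(k+1+t))/2)) := by
          rw [pow_mul, hr2]
        rw [h34]
        apply pow_le_pow_of_le_one hr0 (le_of_lt hr1)
        omega
      have hmin : r^(k + min t (T-t)) ≤ r^k * (r^t + r^(T-t)) := by
        rw [pow_add]
        apply mul_le_mul_of_nonneg_left ?_ (by positivity)
        rcases Nat.le_total t (T-t) with h | h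
        · rw [min_eq_left h]
          have : (0:ℝ) ≤ r^(T-t) := by positivity
          linarith
        · rw [min_eq_right h]
          have : (0:ℝ) ≤ r^t := by positivity
          linarith
      calc (1/2:ℝ) * (3/4:ℝ)^(min (k+1+t) (2*n-(k+1+t))/2)
          ≤ (1/2:ℝ) * r^(k + min t (T-t)) := by
            apply mul_le_mul_of_nonneg_left hexp (by norm_num)
        _ ≤ (1/2) * (r^k * (r^t + r^(T-t))) := by
            apply mul_le_mul_of_nonneg_left hmin (by norm_num)
    calc ∑ t ∈ Finset.range (T+1), pr0n n (fun S => ((k+1+t : ℕ) : ℤ) ∉ S + S)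
        ≤ ∑ t ∈ Finset.range (T+1), (1/2) * (r^k * (r^t + r^(T-t))) :=
          Finset.sum_le_sum hterm
      _ = (1/2) * r^k * ((∑ t ∈ Finset.range (T+1), r^t) + ∑ t ∈ Finset.range (T+1), r^(T-t)) := by
          rw [← Finset.sum_add_distrib]
          rw [Finset.mul_sum]
          apply Finset.sum_congr rfl
          intro t _
          ring
      _ = (1/2) * r^k * ((∑ t ∈ Finset.range (T+1), r^t) + ∑ t ∈ Finset.range (T+1), r^t) := by
          congr 1
          congr 1
          rw [← Finset.sum_range_reflect]
          apply Finset.sum_congr rfl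
          intro t ht
          rw [Finset.mem_range] at ht
          congr 1
          omega
      _ = r^k * (∑ t ∈ Finset.range (T+1), r^t) := by ring
      _ ≤ r^k * (1/(1-r)) := by
          apply mul_le_mul_of_nonneg_left (MM_my_geom_le r hr0 hr1 (T+1)) (by positivity)
      _ = (3/4 : ℝ) ^ ((k:ℝ) / 2) / (1 - r) := by
          have h4 : Real.sqrt 4 = 2 := by
            rw [show (4:ℝ) = 2^2 by norm_num, Real.sqrt_sq (by norm_num)]
          have hsq : Real.sqrt (3/4) = Real.sqrt 3 / 2 := by
            rw [eq_div_iff (two_ne_zero), show (2:ℝ) = Real.sqrt 4 from h4.symm,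
              ← Real.sqrt_mul (by norm_num)]
            norm_num
          have hr : r = (3/4:ℝ)^((1:ℝ)/2) := by
            rw [← Real.sqrt_eq_rpow, hsq, hrdef]
          have hrk : r^k = (3/4:ℝ)^((k:ℝ)/2) := by
            rw [hr, ← Real.rpow_natCast ((3/4:ℝ)^((1:ℝ)/2)) k,
              ← Real.rpow_mul (by norm_num : (0:ℝ) ≤ 3/4)]
            congr 1
            ring
          rw [mul_one_div, hrk]
  · intro S hE
    rw [Finset.not_subset] at hE
    obtain ⟨i, hi, hiS⟩ := hE
    rw [Finset.mem_Icc] at hi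
    refine ⟨(i - (k+1)).toNat, by omega, ?_⟩
    have : ((k+1+(i - (k+1)).toNat : ℕ) : ℤ) = i := by
      push_cast
      omega
    show ((k+1+(i - (k+1)).toNat : ℕ) : ℤ) ∉ S + S
    rwa [this]


lemma MM_part2 (n k : ℕ) (hk : 0 < k) (hn : 2 * k < n) :
    pr0n n (fun S => ¬ Finset.Icc (-(n:ℤ) + k + 1) ((n:ℤ) - k - 1) ⊆ S - S)
      ≤ 2 * (3/4 : ℝ) ^ k + (n + 1) * (3/4 : ℝ) ^ (((n:ℝ) - 1) / 3) := by
  set B : ℝ := (3/4 : ℝ) ^ (((n:ℝ) - 1) / 3) with hB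
  have hB0 : 0 ≤ B := Real.rpow_nonneg (by norm_num) _
  set h := n - k - 1 with hh
  have hunion := MM_pr0n_union n (h+1)
    (fun S => ¬ Finset.Icc (-(n:ℤ) + k + 1) ((n:ℤ) - k - 1) ⊆ S - S)
    (fun e S => ((e:ℕ):ℤ) ∉ S - S) ?_
  · refine hunion.trans ?_
    rw [← Finset.sum_filter_add_sum_filter_not (Finset.range (h+1)) (fun e => 2*e ≤ n)]
    have hsmall : ∑ e ∈ (Finset.range (h+1)).filter (fun e => 2*e ≤ n),
        pr0n n (fun S => ((e:ℕ):ℤ) ∉ S - S) ≤ (n+1) * B := by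
      have hcard : ((Finset.range (h+1)).filter (fun e => 2*e ≤ n)).card ≤ n/2 + 1 := by
        have : (Finset.range (h+1)).filter (fun e => 2*e ≤ n) ⊆ Finset.range (n/2+1) := by
          intro e he
          simp only [Finset.mem_filter, Finset.mem_range] at he ⊢
          omega
        exact (Finset.card_le_card this).trans (by rw [Finset.card_range])
      have hterm : ∀ e ∈ (Finset.range (h+1)).filter (fun e => 2*e ≤ n),
          pr0n n (fun S => ((e:ℕ):ℤ) ∉ S - S) ≤ B := by
        intro e he
        simp only [Finset.mem_filter, Finset.mem_range] at he
        rcases Nat.eq_zero_or_pos e with rfl | hepos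
        · rw [MM_pr0n_eq_zero n _ (fun S h0 _ hP => hP (by
            simpa using Finset.sub_mem_sub h0 h0))]
          exact hB0
        · have hconv : ∀ c : ℕ, n ≤ 3*c + 1 → (3/4:ℝ)^c ≤ B := by
            intro c hc
            rw [hB, ← Real.rpow_natCast (3/4:ℝ) c]
            apply Real.rpow_le_rpow_of_exponent_ge (by norm_num) (by norm_num)
            have : ((n:ℝ)) ≤ 3*c + 1 := by exact_mod_cast hc
            linarith
          rcases Nat.le_total (3*e) (n+1) with h3 | h3
          · refine (MM_diff_mid2 n e hepos h3 (by omega)).trans (hconv _ ?_)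
            omega
          · refine (MM_diff_mid1 n e hepos he.2).trans (hconv _ ?_)
            omega
      calc ∑ e ∈ (Finset.range (h+1)).filter (fun e => 2*e ≤ n),
            pr0n n (fun S => ((e:ℕ):ℤ) ∉ S - S)
          ≤ ((Finset.range (h+1)).filter (fun e => 2*e ≤ n)).card • B :=
            Finset.sum_le_card_nsmul _ _ B hterm
        _ = (((Finset.range (h+1)).filter (fun e => 2*e ≤ n)).card : ℝ) * B := by
            rw [nsmul_eq_mul]
        _ ≤ (n+1) * B := by
            apply mul_le_mul_of_nonneg_right ?_ hB0
            have : (((Finset.range (h+1)).filter (fun e => 2*e ≤ n)).card : ℝ) ≤ (n/2 + 1 : ℕ) := by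
              exact_mod_cast hcard
            refine this.trans ?_
            have : (n/2 + 1 : ℕ) ≤ n + 1 := by omega
            exact_mod_cast this
    have hlarge : ∑ e ∈ (Finset.range (h+1)).filter (fun e => ¬ 2*e ≤ n),
        pr0n n (fun S => ((e:ℕ):ℤ) ∉ S - S) ≤ 2 * (3/4:ℝ)^k := by
      have hterm : ∀ e ∈ (Finset.range (h+1)).filter (fun e => ¬ 2*e ≤ n),
          pr0n n (fun S => ((e:ℕ):ℤ) ∉ S - S) ≤ (1/4) * (3/4:ℝ)^(n-e-1) := by
        intro e he
        simp only [Finset.mem_filter, Finset.mem_range] at he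
        exact MM_diff_large n k e hk hn (by omega) (by omega)
      calc ∑ e ∈ (Finset.range (h+1)).filter (fun e => ¬ 2*e ≤ n),
            pr0n n (fun S => ((e:ℕ):ℤ) ∉ S - S)
          ≤ ∑ e ∈ (Finset.range (h+1)).filter (fun e => ¬ 2*e ≤ n),
            (1/4) * (3/4:ℝ)^(n-e-1) := Finset.sum_le_sum hterm
        _ ≤ ∑ e ∈ Finset.range (h+1), (1/4) * (3/4:ℝ)^(n-e-1) := by
            apply Finset.sum_le_sum_of_subset_of_nonneg (Finset.filter_subset _ _)
            intro e _ _
            positivity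
        _ = ∑ e ∈ Finset.range (h+1), (1/4) * ((3/4:ℝ)^k * (3/4)^(h-e)) := by
            apply Finset.sum_congr rfl
            intro e he
            rw [Finset.mem_range] at he
            rw [← pow_add]
            congr 2
            omega
        _ = (1/4) * (3/4:ℝ)^k * ∑ e ∈ Finset.range (h+1), (3/4:ℝ)^(h-e) := by
            rw [Finset.mul_sum]
            apply Finset.sum_congr rfl
            intro e _
            ring
        _ = (1/4) * (3/4:ℝ)^k * ∑ e ∈ Finset.range (h+1), (3/4:ℝ)^e := by
            congr 1
            rw [← Finset.sum_range_reflect]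
            apply Finset.sum_congr rfl
            intro e he
            rw [Finset.mem_range] at he
            congr 1
            omega
        _ ≤ (1/4) * (3/4:ℝ)^k * (1/(1-3/4)) := by
            apply mul_le_mul_of_nonneg_left (MM_my_geom_le (3/4) (by norm_num) (by norm_num) (h+1))
            positivity
        _ = (3/4:ℝ)^k := by
            rw [show (1:ℝ)/(1-3/4) = 4 by norm_num]
            ring
        _ ≤ 2 * (3/4:ℝ)^k := by
            have : (0:ℝ) ≤ (3/4:ℝ)^k := by positivity
            linarith
    linarith
  · intro S hE
    rw [Finset.not_subset] at hE
    obtain ⟨d, hd, hdS⟩ := hE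
    rw [Finset.mem_Icc] at hd
    refine ⟨d.natAbs, by omega, ?_⟩
    show ((d.natAbs:ℕ):ℤ) ∉ S - S
    intro hmem
    apply hdS
    rcases Int.natAbs_eq d with heq | heq
    · rwa [← heq] at hmem
    · rw [Finset.mem_sub] at hmem
      obtain ⟨a, ha, b, hb, hab⟩ := hmem
      rw [Finset.mem_sub]
      exact ⟨b, hb, a, ha, by omega⟩


/-- bounds on the probability of a missing middle sum or difference, for a
uniform random `S ⊆ [0,n]` with `0, n ∈ S`. -/
theorem missing_middle_prob_0n (n k : ℕ) (hk : 0 < k) (hn : 2 * k < n) :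
    pr0n n (fun S => ¬ Finset.Icc ((k:ℤ) + 1) (2 * (n:ℤ) - k - 1) ⊆ S + S)
      ≤ (3/4 : ℝ) ^ ((k:ℝ) / 2) / (1 - Real.sqrt 3 / 2) ∧
    pr0n n (fun S => ¬ Finset.Icc (-(n:ℤ) + k + 1) ((n:ℤ) - k - 1) ⊆ S - S)
      ≤ 2 * (3/4 : ℝ) ^ k + (n + 1) * (3/4 : ℝ) ^ (((n:ℝ) - 1) / 3) := by
  exact ⟨MM_part1 n k hk hn, MM_part2 n k hk hn⟩
end

section
/- Let n and k̄ be positive integers with n > 2k̄, and let S be a uniformly random subset of [0,n]. Then P([k̄+1, 2n−k̄−1] ⊄ S+S) ≤ 3·(3/4)^{k̄/2} / (2 − √3), and P([−n+k̄+1, n−k̄−1] ⊄ S−S) ≤ 8·(3/4)^{k̄+2} + (n+1)·(3/4)^{(n−1)/3}. -/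
open Finset Filter Pointwise
open scoped Classical

lemma pair_count (f g : ℤ → ℤ) (A : Finset ℤ) :
    ∀ (U : Finset ℤ),
      (∀ a ∈ A, f a ∈ U ∧ g a ∈ U) →
      (∀ a ∈ A, ∀ b ∈ A, f a ≠ g b) →
      Set.InjOn f A → Set.InjOn g A →
      (U.powerset.filter fun S => ∀ a ∈ A, ¬(f a ∈ S ∧ g a ∈ S)).card * 4 ^ A.card
        ≤ 3 ^ A.card * 2 ^ U.card := by
  induction A using Finset.induction_on with
  | empty =>
      intro U _ _ _ _
      simp [Finset.card_powerset]
  | @insert a₀ A ha ih =>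
      intro U hmem hcross hf hg
      set x := f a₀ with hx
      set y := g a₀ with hy
      have hxy : x ≠ y := hcross a₀ (mem_insert_self _ _) a₀ (mem_insert_self _ _)
      have hxU : x ∈ U := (hmem a₀ (mem_insert_self _ _)).1
      have hyU : y ∈ U := (hmem a₀ (mem_insert_self _ _)).2
      set P : Finset ℤ := {x, y} with hP
      have hPU : P ⊆ U := by
        intro z hz
        rcases Finset.mem_insert.1 hz with rfl | hz
        · exact hxU
        · rw [Finset.mem_singleton.1 hz]; exact hyU
      have hPcard : P.card = 2 := Finset.card_pair hxy
      set U' := U \ P with hU'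
      set X : Finset (Finset ℤ) := P.powerset.erase P with hX
      have hXcard : X.card = 3 := by
        rw [hX, Finset.card_erase_of_mem (Finset.mem_powerset_self P), Finset.card_powerset, hPcard]
        norm_num
      set Y := U'.powerset.filter (fun S => ∀ b ∈ A, ¬(f b ∈ S ∧ g b ∈ S)) with hY
      have step1 : (U.powerset.filter fun S => ∀ b ∈ insert a₀ A, ¬(f b ∈ S ∧ g b ∈ S)).card
          ≤ 3 * Y.card := by
        have h := Finset.card_le_card_of_injOn (fun S => (S ∩ P, S \ P))
          (s := U.powerset.filter fun S => ∀ b ∈ insert a₀ A, ¬(f b ∈ S ∧ g b ∈ S))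
          (t := X ×ˢ Y) ?_ ?_
        · refine h.trans ?_
          rw [Finset.card_product, hXcard]
        · intro S hS
          simp only [Finset.mem_coe, Finset.mem_filter, Finset.mem_powerset] at hS
          obtain ⟨hSU, hpred⟩ := hS
          have hnotboth : ¬(x ∈ S ∧ y ∈ S) := hpred a₀ (mem_insert_self _ _)
          refine Finset.mem_product.2 ⟨?_, ?_⟩
          · dsimp only
            rw [hX]
            refine Finset.mem_erase.2 ⟨?_, Finset.mem_powerset.2 (Finset.inter_subset_right)⟩
            intro hEq
            replace hEq : S ∩ P = P := hEq
            have hxS : x ∈ S := by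
              have h2 : x ∈ S ∩ P := by rw [hEq]; simp [hP]
              exact (Finset.mem_inter.1 h2).1
            have hyS : y ∈ S := by
              have h2 : y ∈ S ∩ P := by rw [hEq]; simp [hP]
              exact (Finset.mem_inter.1 h2).1
            exact hnotboth ⟨hxS, hyS⟩
          · dsimp only
            simp only [hY, Finset.mem_filter, Finset.mem_powerset]
            refine ⟨Finset.sdiff_subset_sdiff hSU le_rfl, ?_⟩
            intro b hb ⟨h1, h2⟩
            exact hpred b (Finset.mem_insert_of_mem hb) ⟨(Finset.mem_sdiff.1 h1).1, (Finset.mem_sdiff.1 h2).1⟩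
        · intro S1 h1 S2 h2 hEq
          have e1 : S1 ∩ P = S2 ∩ P := congrArg Prod.fst hEq
          have e2 : S1 \ P = S2 \ P := congrArg Prod.snd hEq
          calc S1 = S1 \ P ∪ S1 ∩ P := (Finset.sdiff_union_inter S1 P).symm
            _ = S2 \ P ∪ S2 ∩ P := by rw [e1, e2]
            _ = S2 := Finset.sdiff_union_inter S2 P
      have hcard2 : 2 ≤ U.card := by
        calc 2 = P.card := hPcard.symm
          _ ≤ U.card := Finset.card_le_card hPU
      have hUcard : U.card = U'.card + 2 := by
        rw [hU', Finset.card_sdiff_of_subset hPU, hPcard]; omega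
      have step2 : Y.card * 4 ^ A.card ≤ 3 ^ A.card * 2 ^ U'.card := by
        apply ih
        · intro b hb
          have hfb := (hmem b (mem_insert_of_mem hb)).1
          have hgb := (hmem b (mem_insert_of_mem hb)).2
          constructor
          · rw [hU', Finset.mem_sdiff]
            refine ⟨hfb, ?_⟩
            simp only [hP, Finset.mem_insert, Finset.mem_singleton]
            push_neg
            constructor
            · intro hEq
              exact ha (by
                have := hf (Finset.mem_coe.2 (mem_insert_of_mem hb)) (Finset.mem_coe.2 (mem_insert_self _ _)) hEq
                rwa [this] at hb)
            · exact hcross b (mem_insert_of_mem hb) a₀ (mem_insert_self _ _)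
          · rw [hU', Finset.mem_sdiff]
            refine ⟨hgb, ?_⟩
            simp only [hP, Finset.mem_insert, Finset.mem_singleton]
            push_neg
            constructor
            · exact fun hEq => (hcross a₀ (mem_insert_self _ _) b (mem_insert_of_mem hb)) hEq.symm
            · intro hEq
              exact ha (by
                have := hg (Finset.mem_coe.2 (mem_insert_of_mem hb)) (Finset.mem_coe.2 (mem_insert_self _ _)) hEq
                rwa [this] at hb)
        · intro b hb c hc
          exact hcross b (mem_insert_of_mem hb) c (mem_insert_of_mem hc)
        · exact hf.mono (by intro z hz; exact Finset.mem_coe.2 (mem_insert_of_mem (Finset.mem_coe.1 hz)))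
        · exact hg.mono (by intro z hz; exact Finset.mem_coe.2 (mem_insert_of_mem (Finset.mem_coe.1 hz)))
      rw [Finset.card_insert_of_notMem ha, hUcard]
      calc (U.powerset.filter fun S => ∀ b ∈ insert a₀ A, ¬(f b ∈ S ∧ g b ∈ S)).card * 4 ^ (A.card + 1)
          = (U.powerset.filter fun S => ∀ b ∈ insert a₀ A, ¬(f b ∈ S ∧ g b ∈ S)).card * 4 ^ A.card * 4 := by ring
        _ ≤ 3 * Y.card * 4 ^ A.card * 4 := by
            have := Nat.mul_le_mul_right (4 ^ A.card * 4) step1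
            calc _ = (U.powerset.filter fun S => ∀ b ∈ insert a₀ A, ¬(f b ∈ S ∧ g b ∈ S)).card * (4 ^ A.card * 4) := by ring
              _ ≤ 3 * Y.card * (4 ^ A.card * 4) := Nat.mul_le_mul_right _ step1
              _ = 3 * Y.card * 4 ^ A.card * 4 := by ring
        _ = 12 * (Y.card * 4 ^ A.card) := by ring
        _ ≤ 12 * (3 ^ A.card * 2 ^ U'.card) := Nat.mul_le_mul_left _ step2
        _ = 3 ^ (A.card + 1) * 2 ^ (U'.card + 2) := by rw [pow_succ, pow_add]; ring

lemma avoid_sum (U : Finset ℤ) (i lo : ℤ) (p : ℕ)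
    (hmem : ∀ a, lo ≤ a → a < lo + p → a ∈ U ∧ i - a ∈ U)
    (hlt : 2 * (lo + p) ≤ i + 1) :
    (U.powerset.filter fun S => i ∉ S + S).card * 4 ^ p ≤ 3 ^ p * 2 ^ U.card := by
  have hcard : (Finset.Ico lo (lo + p)).card = p := by
    rw [Int.card_Ico]; omega
  have key := pair_count id (fun a => i - a) (Finset.Ico lo (lo + p)) U
    (fun a ha => by
      rw [Finset.mem_Ico] at ha
      exact hmem a ha.1 ha.2)
    (fun a ha b hb => by
      rw [Finset.mem_Ico] at ha hb
      simp only [id]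
      omega)
    (fun a ha b hb h => by simpa using h)
    (fun a ha b hb h => by
      simp only at h
      omega)
  rw [hcard] at key
  refine le_trans (Nat.mul_le_mul_right _ (Finset.card_le_card ?_)) key
  intro S hS
  simp only [Finset.mem_filter] at hS ⊢
  refine ⟨hS.1, ?_⟩
  intro a ha ⟨h1, h2⟩
  rw [Finset.mem_Ico] at ha
  simp only [id] at h1
  exact hS.2 (by
    have := Finset.add_mem_add h1 h2
    rwa [show a + (i - a) = i by ring] at this)

lemma avoid_diff (U : Finset ℤ) (d : ℤ) (A : Finset ℤ)
    (hmem : ∀ a ∈ A, a ∈ U ∧ a + d ∈ U)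
    (hcross : ∀ a ∈ A, ∀ b ∈ A, a ≠ b + d) :
    (U.powerset.filter fun S => d ∉ S - S).card * 4 ^ A.card ≤ 3 ^ A.card * 2 ^ U.card := by
  have key := pair_count id (fun a => a + d) A U
    (fun a ha => hmem a ha)
    (fun a ha b hb => by simpa using hcross a ha b hb)
    (fun a ha b hb h => by simpa using h)
    (fun a ha b hb h => by simp only at h; omega)
  refine le_trans (Nat.mul_le_mul_right _ (Finset.card_le_card ?_)) key
  intro S hS
  simp only [Finset.mem_filter] at hS ⊢
  refine ⟨hS.1, ?_⟩
  intro a ha ⟨h1, h2⟩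
  simp only [id] at h1
  exact hS.2 (by
    have := Finset.sub_mem_sub h2 h1
    rwa [show a + d - a = d by ring] at this)

noncomputable def qq : ℝ := Real.sqrt 3 / 2

lemma qq_sq : qq ^ 2 = 3 / 4 := by
  rw [qq, div_pow, Real.sq_sqrt (by norm_num : (3:ℝ) ≥ 0)]
  norm_num

lemma qq_nonneg : 0 ≤ qq := by
  rw [qq]; positivity

lemma sqrt3_lt_two : Real.sqrt 3 < 2 := by
  nlinarith [Real.sq_sqrt (by norm_num : (3:ℝ) ≥ 0), Real.sqrt_nonneg 3]

lemma qq_lt_one : qq < 1 := by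
  rw [qq]; linarith [sqrt3_lt_two]

lemma half_le_qq : 1 / 2 ≤ qq := by
  rw [qq]
  have : 1 ≤ Real.sqrt 3 := by
    nlinarith [Real.sq_sqrt (by norm_num : (3:ℝ) ≥ 0), Real.sqrt_nonneg 3]
  linarith

lemma cast_bound {X p m : ℕ} (h : X * 4 ^ p ≤ 3 ^ p * 2 ^ m) :
    (X : ℝ) ≤ (3 / 4) ^ p * 2 ^ m := by
  have h' : (X : ℝ) * 4 ^ p ≤ 3 ^ p * 2 ^ m := by exact_mod_cast h
  rw [div_pow, div_mul_eq_mul_div, le_div_iff₀ (by positivity)]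
  linarith

lemma card_Icc_int (n : ℕ) : (Finset.Icc (0:ℤ) n).card = n + 1 := by
  rw [Int.card_Icc]; omega

lemma Ni_core (n : ℕ) (i lo : ℤ) (c : ℕ) (hlo : 0 ≤ lo) (hin : i - lo ≤ n)
    (hc : lo + c - 1 = i - lo) (hc1 : 1 ≤ c) :
    ((((Finset.Icc (0:ℤ) n).powerset.filter fun S => i ∉ S + S).card : ℝ))
      ≤ qq ^ c * 2 ^ (n + 1) := by
  rcases Nat.even_or_odd c with ⟨p, hp⟩ | ⟨p, hp⟩
  · -- even case : c = p + p
    have hpz : (c : ℤ) = p + p := by exact_mod_cast hp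
    have hmem : ∀ a, lo ≤ a → a < lo + (p:ℤ) → a ∈ Finset.Icc (0:ℤ) n ∧ i - a ∈ Finset.Icc (0:ℤ) n := by
      intro a h1 h2
      constructor <;> rw [Finset.mem_Icc] <;> omega
    have hlt : 2 * (lo + (p:ℤ)) ≤ i + 1 := by omega
    have key := avoid_sum (Finset.Icc (0:ℤ) n) i lo p hmem hlt
    rw [card_Icc_int] at key
    have hb := cast_bound key
    calc ((((Finset.Icc (0:ℤ) n).powerset.filter fun S => i ∉ S + S).card : ℝ))
        ≤ (3/4) ^ p * 2 ^ (n+1) := hb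
      _ = qq ^ c * 2 ^ (n+1) := by
          rw [show c = 2 * p by omega, pow_mul, qq_sq]
  · -- odd case : c = 2p+1
    have hpz : (c : ℤ) = 2 * p + 1 := by exact_mod_cast hp
    set mid := lo + (p:ℤ) with hmid
    set U' := (Finset.Icc (0:ℤ) n).erase mid with hU'
    have hmidU : mid ∈ Finset.Icc (0:ℤ) n := by rw [Finset.mem_Icc]; omega
    have himid : mid + mid = i := by omega
    have hsub : ((Finset.Icc (0:ℤ) n).powerset.filter fun S => i ∉ S + S)
        ⊆ U'.powerset.filter fun S => i ∉ S + S := by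
      intro S hS
      simp only [Finset.mem_filter, Finset.mem_powerset] at hS ⊢
      refine ⟨Finset.subset_erase.2 ⟨hS.1, ?_⟩, hS.2⟩
      intro hmidS
      exact hS.2 (by
        have := Finset.add_mem_add hmidS hmidS
        rwa [himid] at this)
    have hU'card : U'.card = n := by
      rw [hU', Finset.card_erase_of_mem hmidU, card_Icc_int]
      omega
    have hmem : ∀ a, lo ≤ a → a < lo + (p:ℤ) → a ∈ U' ∧ i - a ∈ U' := by
      intro a h1 h2
      constructor <;> (rw [hU', Finset.mem_erase, Finset.mem_Icc]; omega)
    have hlt : 2 * (lo + (p:ℤ)) ≤ i + 1 := by omega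
    have key := avoid_sum U' i lo p hmem hlt
    rw [hU'card] at key
    have hb := cast_bound key
    have hle : (((((Finset.Icc (0:ℤ) n).powerset.filter fun S => i ∉ S + S).card : ℕ)) : ℝ)
        ≤ ((U'.powerset.filter fun S => i ∉ S + S).card : ℝ) := by
      exact_mod_cast Finset.card_le_card hsub
    calc ((((Finset.Icc (0:ℤ) n).powerset.filter fun S => i ∉ S + S).card : ℝ))
        ≤ (3/4) ^ p * 2 ^ n := le_trans hle hb
      _ = ((3/4) ^ p * (1/2)) * 2 ^ (n+1) := by ring
      _ ≤ (qq ^ (2*p) * qq) * 2 ^ (n+1) := by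
          have h1 : (3/4:ℝ) ^ p = qq ^ (2*p) := by rw [pow_mul, qq_sq]
          have h2 : (0:ℝ) ≤ qq ^ (2*p) := pow_nonneg qq_nonneg _
          apply mul_le_mul_of_nonneg_right _ (by positivity)
          rw [h1]
          exact mul_le_mul_of_nonneg_left half_le_qq h2
      _ = qq ^ c * 2 ^ (n+1) := by rw [hp]; ring

lemma mygeom_le (r : ℝ) (h0 : 0 ≤ r) (h1 : r < 1) (m : ℕ) :
    ∑ j ∈ Finset.range m, r ^ j ≤ 1 / (1 - r) := by
  have h2 : 0 < 1 - r := by linarith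
  rw [geom_sum_eq (ne_of_lt h1) m]
  have key : (r ^ m - 1) / (r - 1) = (1 - r ^ m) / (1 - r) := by
    rw [← neg_div_neg_eq]; ring_nf
  rw [key]
  gcongr
  nlinarith [pow_nonneg h0 m]

lemma sum_left (r : ℝ) (h0 : 0 ≤ r) (h1 : r < 1) (a b : ℤ) :
    ∑ i ∈ Finset.Icc a b, r ^ (i - a).toNat ≤ 1 / (1 - r) := by
  have key : ∑ i ∈ Finset.Icc a b, r ^ (i - a).toNat
      = ∑ j ∈ Finset.range ((b + 1 - a).toNat), r ^ j := by
    apply Finset.sum_nbij' (fun i => (i - a).toNat) (fun j => a + j)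
    · intro x hx; rw [Finset.mem_Icc] at hx; rw [Finset.mem_range]; omega
    · intro x hx; rw [Finset.mem_range] at hx; rw [Finset.mem_Icc]; omega
    · intro x hx; rw [Finset.mem_Icc] at hx; omega
    · intro x hx; rw [Finset.mem_range] at hx; omega
    · intro x hx; rfl
  rw [key]; exact mygeom_le r h0 h1 _

lemma sum_right (r : ℝ) (h0 : 0 ≤ r) (h1 : r < 1) (a b : ℤ) :
    ∑ i ∈ Finset.Icc a b, r ^ (b - i).toNat ≤ 1 / (1 - r) := by
  have key : ∑ i ∈ Finset.Icc a b, r ^ (b - i).toNat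
      = ∑ j ∈ Finset.range ((b + 1 - a).toNat), r ^ j := by
    apply Finset.sum_nbij' (fun i => (b - i).toNat) (fun j => b - j)
    · intro x hx; rw [Finset.mem_Icc] at hx; rw [Finset.mem_range]; omega
    · intro x hx; rw [Finset.mem_range] at hx; rw [Finset.mem_Icc]; omega
    · intro x hx; rw [Finset.mem_Icc] at hx; omega
    · intro x hx; rw [Finset.mem_range] at hx; omega
    · intro x hx; rfl
  rw [key]; exact mygeom_le r h0 h1 _

lemma Ni_bound (n k : ℕ) (hk : 0 < k) (hn : 2 * k < n) (i : ℤ)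
    (hia : (k:ℤ) + 1 ≤ i) (hib : i ≤ 2 * (n:ℤ) - k - 1) :
    ((((Finset.Icc (0:ℤ) n).powerset.filter fun S => i ∉ S + S).card : ℝ))
      ≤ qq ^ (k + 2) * (qq ^ (i - ((k:ℤ)+1)).toNat + qq ^ ((2*(n:ℤ)-k-1) - i).toNat)
        * 2 ^ (n + 1) := by
  have hq0 : (0:ℝ) ≤ qq := qq_nonneg
  rcases le_or_gt i (n:ℤ) with hcase | hcase
  · set c : ℕ := (i - ((k:ℤ)+1)).toNat + (k + 2) with hcdef
    have hcz : (c:ℤ) = i + 1 := by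
      have : ((i - ((k:ℤ)+1)).toNat : ℤ) = i - ((k:ℤ)+1) := by omega
      push_cast [hcdef]
      omega
    have hcore := Ni_core n i 0 c (le_refl 0) (by omega) (by omega) (by omega)
    refine hcore.trans ?_
    apply mul_le_mul_of_nonneg_right _ (by positivity)
    have : qq ^ c = qq ^ (k+2) * qq ^ (i - ((k:ℤ)+1)).toNat := by
      rw [hcdef, pow_add]; ring
    rw [this]
    apply mul_le_mul_of_nonneg_left _ (by positivity)
    exact le_add_of_nonneg_right (by positivity)
  · set c : ℕ := ((2*(n:ℤ)-k-1) - i).toNat + (k + 2) with hcdef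
    have hcz : (c:ℤ) = 2*(n:ℤ) + 1 - i := by
      have : (((2*(n:ℤ)-k-1) - i).toNat : ℤ) = (2*(n:ℤ)-k-1) - i := by omega
      push_cast [hcdef]
      omega
    have hcore := Ni_core n i (i - n) c (by omega) (by omega) (by omega) (by omega)
    refine hcore.trans ?_
    apply mul_le_mul_of_nonneg_right _ (by positivity)
    have : qq ^ c = qq ^ (k+2) * qq ^ ((2*(n:ℤ)-k-1) - i).toNat := by
      rw [hcdef, pow_add]; ring
    rw [this]
    apply mul_le_mul_of_nonneg_left _ (by positivity)
    exact le_add_of_nonneg_left (by positivity)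

lemma qq_pow_k (k : ℕ) : qq ^ k = (3/4:ℝ) ^ ((k:ℝ)/2) := by
  rw [show ((k:ℝ)/2) = (1/2) * k by ring, Real.rpow_mul (by norm_num : (0:ℝ) ≤ 3/4),
    Real.rpow_natCast, ← Real.sqrt_eq_rpow]
  congr 1
  rw [qq, Real.sqrt_div (by norm_num : (0:ℝ) ≤ 3) 4,
    show (4:ℝ) = 2^2 by norm_num, Real.sqrt_sq (by norm_num : (0:ℝ) ≤ 2)]

lemma sums_part (n k : ℕ) (hk : 0 < k) (hn : 2 * k < n) :
    prAll n (fun S => ¬ Finset.Icc ((k:ℤ) + 1) (2 * (n:ℤ) - k - 1) ⊆ S + S)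
      ≤ 3 * (3/4 : ℝ) ^ ((k:ℝ) / 2) / (2 - Real.sqrt 3) := by
  have hq0 : (0:ℝ) ≤ qq := qq_nonneg
  have hq1 : qq < 1 := qq_lt_one
  have hs3 : Real.sqrt 3 < 2 := sqrt3_lt_two
  have hs : (0:ℝ) < 2 - Real.sqrt 3 := by linarith
  set a : ℤ := (k:ℤ) + 1 with ha
  set b : ℤ := 2 * (n:ℤ) - k - 1 with hb
  have hcover : ((Finset.Icc (0:ℤ) n).powerset.filter
        (fun S => ¬ Finset.Icc a b ⊆ S + S))
      ⊆ (Finset.Icc a b).biUnion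
          (fun i => (Finset.Icc (0:ℤ) n).powerset.filter (fun S => i ∉ S + S)) := by
    intro S hS
    simp only [Finset.mem_filter, Finset.mem_powerset] at hS
    obtain ⟨i, hiI, hiS⟩ := Finset.not_subset.1 hS.2
    refine Finset.mem_biUnion.2 ⟨i, hiI, ?_⟩
    simp only [Finset.mem_filter, Finset.mem_powerset]
    exact ⟨hS.1, hiS⟩
  have h1 : (((Finset.Icc (0:ℤ) n).powerset.filter
        (fun S => ¬ Finset.Icc a b ⊆ S + S)).card : ℝ)
      ≤ ∑ i ∈ Finset.Icc a b,
          ((((Finset.Icc (0:ℤ) n).powerset.filter fun S => i ∉ S + S).card : ℝ)) := by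
    have := (Finset.card_le_card hcover).trans Finset.card_biUnion_le
    exact_mod_cast this
  have h2 : ∑ i ∈ Finset.Icc a b,
        ((((Finset.Icc (0:ℤ) n).powerset.filter fun S => i ∉ S + S).card : ℝ))
      ≤ ∑ i ∈ Finset.Icc a b,
          (qq ^ (k + 2) * (qq ^ (i - a).toNat + qq ^ (b - i).toNat) * 2 ^ (n + 1)) := by
    apply Finset.sum_le_sum
    intro i hi
    rw [Finset.mem_Icc] at hi
    exact Ni_bound n k hk hn i hi.1 hi.2
  have h3 : ∑ i ∈ Finset.Icc a b,
        (qq ^ (k + 2) * (qq ^ (i - a).toNat + qq ^ (b - i).toNat) * 2 ^ (n + 1))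
      ≤ qq ^ (k + 2) * (2 / (1 - qq)) * 2 ^ (n + 1) := by
    have hsum : ∑ i ∈ Finset.Icc a b, (qq ^ (i - a).toNat + qq ^ (b - i).toNat)
        ≤ 2 / (1 - qq) := by
      rw [Finset.sum_add_distrib]
      have l1 := sum_left qq hq0 hq1 a b
      have l2 := sum_right qq hq0 hq1 a b
      calc ∑ i ∈ Finset.Icc a b, qq ^ (i - a).toNat + ∑ i ∈ Finset.Icc a b, qq ^ (b - i).toNat
          ≤ 1 / (1 - qq) + 1 / (1 - qq) := add_le_add l1 l2
        _ = 2 / (1 - qq) := by ring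
    calc ∑ i ∈ Finset.Icc a b,
          (qq ^ (k + 2) * (qq ^ (i - a).toNat + qq ^ (b - i).toNat) * 2 ^ (n + 1))
        = qq ^ (k + 2) * (∑ i ∈ Finset.Icc a b, (qq ^ (i - a).toNat + qq ^ (b - i).toNat)) * 2 ^ (n + 1) := by
          rw [← Finset.sum_mul, ← Finset.mul_sum]
      _ ≤ qq ^ (k + 2) * (2 / (1 - qq)) * 2 ^ (n + 1) := by
          apply mul_le_mul_of_nonneg_right _ (by positivity)
          exact mul_le_mul_of_nonneg_left hsum (by positivity)
  have h4 : qq ^ (k + 2) * (2 / (1 - qq)) * 2 ^ (n + 1)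
      = 3 * (3/4 : ℝ) ^ ((k:ℝ) / 2) / (2 - Real.sqrt 3) * 2 ^ (n + 1) := by
    rw [← qq_pow_k]
    have h1mq : 1 - qq = (2 - Real.sqrt 3)/2 := by rw [qq]; ring
    rw [pow_add, qq_sq, h1mq]
    field_simp
    ring
  have hfinal : (((Finset.Icc (0:ℤ) n).powerset.filter
        (fun S => ¬ Finset.Icc a b ⊆ S + S)).card : ℝ)
      ≤ 3 * (3/4 : ℝ) ^ ((k:ℝ) / 2) / (2 - Real.sqrt 3) * 2 ^ (n + 1) := by
    rw [← h4]
    exact le_trans h1 (le_trans h2 h3)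
  rw [prAll, div_le_iff₀ (by positivity : (0:ℝ) < 2 ^ (n + 1))]
  convert hfinal using 4
  rfl

lemma Nd_zero (n : ℕ) :
    ((Finset.Icc (0:ℤ) n).powerset.filter fun S => (0:ℤ) ∉ S - S).card ≤ 1 := by
  have hsub : ((Finset.Icc (0:ℤ) n).powerset.filter fun S => (0:ℤ) ∉ S - S) ⊆ {∅} := by
    intro S hS
    simp only [Finset.mem_filter, Finset.mem_powerset] at hS
    rw [Finset.mem_singleton]
    by_contra hne
    obtain ⟨x, hx⟩ := Finset.nonempty_of_ne_empty hne
    exact hS.2 (by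
      have := Finset.sub_mem_sub hx hx
      simpa using this)
  simpa using Finset.card_le_card hsub

lemma Nd_large (n : ℕ) (d : ℤ) (h1 : (n:ℤ) < 2*d) (h2 : d ≤ n) :
    ((Finset.Icc (0:ℤ) n).powerset.filter fun S => d ∉ S - S).card * 4 ^ ((n:ℤ)+1-d).toNat
      ≤ 3 ^ ((n:ℤ)+1-d).toNat * 2 ^ (n+1) := by
  have key := avoid_diff (Finset.Icc (0:ℤ) n) d (Finset.Icc (0:ℤ) ((n:ℤ)-d))
    (fun a ha => by
      rw [Finset.mem_Icc] at ha
      constructor <;> (rw [Finset.mem_Icc]; omega))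
    (fun a ha b hb => by
      rw [Finset.mem_Icc] at ha hb
      omega)
  rw [card_Icc_int] at key
  have hcard : (Finset.Icc (0:ℤ) ((n:ℤ)-d)).card = ((n:ℤ)+1-d).toNat := by
    rw [Int.card_Icc]; omega
  rwa [hcard] at key

lemma Nd_small (n : ℕ) (d : ℤ) (hd : 1 ≤ d) (h2 : 2*d ≤ n) :
    ∃ p : ℕ, ((n:ℝ)-1)/3 ≤ p ∧
      ((Finset.Icc (0:ℤ) n).powerset.filter fun S => d ∉ S - S).card * 4 ^ p
        ≤ 3 ^ p * 2 ^ (n+1) := by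
  rcases le_or_gt (n:ℤ) (3*d+1) with hcase | hcase
  · -- middle regime : p = d
    refine ⟨d.toNat, ?_, ?_⟩
    · rw [div_le_iff₀ (by norm_num : (0:ℝ) < 3)]
      have : (n:ℤ) - 1 ≤ 3 * d.toNat := by omega
      have h' : (n:ℝ) - 1 ≤ 3 * (d.toNat:ℝ) := by exact_mod_cast this
      linarith
    · have key := avoid_diff (Finset.Icc (0:ℤ) n) d (Finset.Ico (0:ℤ) d)
        (fun a ha => by
          rw [Finset.mem_Ico] at ha
          constructor <;> (rw [Finset.mem_Icc]; omega))
        (fun a ha b hb => by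
          rw [Finset.mem_Ico] at ha hb
          omega)
      rw [card_Icc_int] at key
      have hcard : (Finset.Ico (0:ℤ) d).card = d.toNat := by
        rw [Int.card_Ico]; omega
      rwa [hcard] at key
  · -- small regime : blocks
    set p : ℕ := (n - d.toNat)/2 + 1 with hpdef
    have hdn : (d.toNat : ℤ) = d := by omega
    set φ : ℤ → ℤ := fun t => 2*(d*(t/d)) + t % d with hφ
    have hd0 : d ≠ 0 := by omega
    have hφdiv : ∀ t, 0 ≤ t → (φ t) / d = 2*(t/d) ∧ (φ t) % d = t % d := by
      intro t ht
      have hφt : φ t = t % d + d * (2*(t/d)) := by simp only [hφ]; ring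
      have hlt : t % d < d := Int.emod_lt_of_pos t (by omega)
      have hge : 0 ≤ t % d := Int.emod_nonneg t hd0
      constructor
      · rw [hφt, Int.add_mul_ediv_left _ _ hd0, Int.ediv_eq_zero_of_lt hge hlt, zero_add]
      · rw [hφt, Int.add_mul_emod_self_left, Int.emod_eq_of_lt hge hlt]
    have hφle : ∀ t, 0 ≤ t → 0 ≤ φ t ∧ φ t ≤ 2*t := by
      intro t ht
      have h1 := Int.emod_nonneg t hd0
      have h2 := Int.emod_lt_of_pos t (show 0 < d by omega)
      have h3 := Int.mul_ediv_add_emod t d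
      constructor
      · have : 0 ≤ t / d := Int.ediv_nonneg ht (by omega)
        simp only [hφ]; positivity
      · simp only [hφ]; omega
    have hφinj : Set.InjOn φ (Finset.Ico (0:ℤ) p) := by
      intro t ht s hs hts
      simp only [Finset.coe_Ico, Set.mem_Ico] at ht hs
      have h1 := hφdiv t ht.1
      have h2 := hφdiv s hs.1
      have e1 : 2*(t/d) = 2*(s/d) := by
        rw [← (hφdiv t ht.1).1, ← (hφdiv s hs.1).1, hts]
      have e2 : t % d = s % d := by
        rw [← (hφdiv t ht.1).2, ← (hφdiv s hs.1).2, hts]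
      have e3 : t / d = s / d := by omega
      have e4 : d*(t/d) = d*(s/d) := by rw [e3]
      have := Int.mul_ediv_add_emod t d
      have := Int.mul_ediv_add_emod s d
      omega
    set A : Finset ℤ := (Finset.Ico (0:ℤ) p).image φ with hA
    have hAcard : A.card = p := by
      rw [hA, Finset.card_image_of_injOn hφinj, Int.card_Ico]
      omega
    refine ⟨p, ?_, ?_⟩
    · rw [div_le_iff₀ (by norm_num : (0:ℝ) < 3)]
      have : (n:ℝ) ≤ 3 * p + 1 := by
        have : n ≤ 3 * p + 1 := by omega
        exact_mod_cast this
      linarith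
    · have key := avoid_diff (Finset.Icc (0:ℤ) n) d A
        (fun a ha => by
          rw [hA, Finset.mem_image] at ha
          obtain ⟨t, ht, rfl⟩ := ha
          rw [Finset.mem_Ico] at ht
          have hb := hφle t ht.1
          have htp : t ≤ (p:ℤ) - 1 := by omega
          have h2t : φ t ≤ 2*((p:ℤ)-1) := by omega
          have hpn : 2*((p:ℤ)-1) + d ≤ n := by
            have h4 : 2*((n - d.toNat)/2) ≤ n - d.toNat := by omega
            omega
          constructor <;> (rw [Finset.mem_Icc]; omega))
        (fun a ha b hb => by
          rw [hA, Finset.mem_image] at ha hb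
          obtain ⟨t, ht, rfl⟩ := ha
          obtain ⟨s, hs, rfl⟩ := hb
          rw [Finset.mem_Ico] at ht hs
          intro hEq
          have h1 := (hφdiv t ht.1).1
          have h2 := (hφdiv s hs.1).1
          have h3 : (φ s + d) / d = 2*(s/d) + 1 := by
            have hφs : φ s + d = s % d + d * (2*(s/d) + 1) := by simp only [hφ]; ring
            have hlt : s % d < d := Int.emod_lt_of_pos s (by omega)
            have hge : 0 ≤ s % d := Int.emod_nonneg s hd0
            rw [hφs, Int.add_mul_ediv_left _ _ hd0, Int.ediv_eq_zero_of_lt hge hlt, zero_add]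
          rw [hEq] at h1
          omega)
      rw [card_Icc_int, hAcard] at key
      exact key

lemma Nd_real (n k : ℕ) (hk : 0 < k) (hn : 2 * k < n) (d : ℤ) (hd0 : 0 ≤ d)
    (hdb : d ≤ (n:ℤ) - k - 1) :
    ((((Finset.Icc (0:ℤ) n).powerset.filter fun S => d ∉ S - S).card : ℝ))
      ≤ (if 2*d ≤ (n:ℤ) then (3/4:ℝ) ^ (((n:ℝ)-1)/3)
          else (3/4:ℝ) ^ (((n:ℤ)+1-d).toNat)) * 2 ^ (n+1) := by
  rcases le_or_gt (2*d) (n:ℤ) with hc | hc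
  · rw [if_pos hc]
    have hbig : (3/4:ℝ) ^ ((n:ℝ)+1) ≤ (3/4:ℝ) ^ (((n:ℝ)-1)/3) := by
      apply Real.rpow_le_rpow_of_exponent_ge (by norm_num) (by norm_num)
      have : (0:ℝ) ≤ (n:ℝ) := Nat.cast_nonneg n
      linarith
    rcases eq_or_lt_of_le hd0 with hd | hd
    · obtain rfl : d = 0 := hd.symm
      have h1 : ((((Finset.Icc (0:ℤ) n).powerset.filter fun S => (0:ℤ) ∉ S - S).card : ℝ)) ≤ 1 := by
        exact_mod_cast Nd_zero n
      refine h1.trans ?_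
      have h2 : (1:ℝ) ≤ (3/2:ℝ) ^ (n+1) := one_le_pow₀ (by norm_num)
      have h3 : (3/4:ℝ) ^ ((n:ℝ)+1) * 2 ^ (n+1) = (3/2:ℝ) ^ (n+1) := by
        rw [show ((n:ℝ)+1) = ((n+1 : ℕ) : ℝ) by push_cast; ring, Real.rpow_natCast, ← mul_pow]
        norm_num
      have h4 : (3/4:ℝ) ^ ((n:ℝ)+1) * 2 ^ (n+1) ≤ (3/4:ℝ) ^ (((n:ℝ)-1)/3) * 2 ^ (n+1) :=
        mul_le_mul_of_nonneg_right hbig (by positivity)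
      linarith
    · obtain ⟨p, hp1, hp2⟩ := Nd_small n d (by omega) hc
      refine (cast_bound hp2).trans ?_
      apply mul_le_mul_of_nonneg_right _ (by positivity)
      calc (3/4:ℝ) ^ p = (3/4:ℝ) ^ ((p:ℝ)) := (Real.rpow_natCast _ p).symm
        _ ≤ (3/4:ℝ) ^ (((n:ℝ)-1)/3) :=
            Real.rpow_le_rpow_of_exponent_ge (by norm_num) (by norm_num) hp1
  · rw [if_neg (not_le.2 hc)]
    exact cast_bound (Nd_large n d hc (by omega))

lemma diff_part (n k : ℕ) (hk : 0 < k) (hn : 2 * k < n) :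
    prAll n (fun S => ¬ Finset.Icc (-(n:ℤ) + k + 1) ((n:ℤ) - k - 1) ⊆ S - S)
      ≤ 8 * (3/4 : ℝ) ^ (k + 2) + (n + 1) * (3/4 : ℝ) ^ (((n:ℝ) - 1) / 3) := by
  set b' : ℤ := (n:ℤ) - k - 1 with hb'
  have hcover : ((Finset.Icc (0:ℤ) n).powerset.filter
        (fun S => ¬ Finset.Icc (-(n:ℤ) + k + 1) b' ⊆ S - S))
      ⊆ (Finset.Icc (0:ℤ) b').biUnion
          (fun d => (Finset.Icc (0:ℤ) n).powerset.filter (fun S => d ∉ S - S)) := by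
    intro S hS
    simp only [Finset.mem_filter, Finset.mem_powerset] at hS
    obtain ⟨d, hdI, hdS⟩ := Finset.not_subset.1 hS.2
    rw [Finset.mem_Icc] at hdI
    rcases le_or_gt 0 d with hd | hd
    · refine Finset.mem_biUnion.2 ⟨d, Finset.mem_Icc.2 ⟨hd, hdI.2⟩, ?_⟩
      simp only [Finset.mem_filter, Finset.mem_powerset]
      exact ⟨hS.1, hdS⟩
    · refine Finset.mem_biUnion.2 ⟨-d, Finset.mem_Icc.2 ⟨by omega, by omega⟩, ?_⟩
      simp only [Finset.mem_filter, Finset.mem_powerset]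
      refine ⟨hS.1, ?_⟩
      intro hmem
      rw [Finset.mem_sub] at hmem
      obtain ⟨x, hx, y, hy, hxy⟩ := hmem
      exact hdS (Finset.mem_sub.2 ⟨y, hy, x, hx, by omega⟩)
  have h1 : (((Finset.Icc (0:ℤ) n).powerset.filter
        (fun S => ¬ Finset.Icc (-(n:ℤ) + k + 1) b' ⊆ S - S)).card : ℝ)
      ≤ ∑ d ∈ Finset.Icc (0:ℤ) b',
          ((((Finset.Icc (0:ℤ) n).powerset.filter fun S => d ∉ S - S).card : ℝ)) := by
    have := (Finset.card_le_card hcover).trans Finset.card_biUnion_le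
    exact_mod_cast this
  have h2 : ∑ d ∈ Finset.Icc (0:ℤ) b',
        ((((Finset.Icc (0:ℤ) n).powerset.filter fun S => d ∉ S - S).card : ℝ))
      ≤ ∑ d ∈ Finset.Icc (0:ℤ) b',
          ((if 2*d ≤ (n:ℤ) then (3/4:ℝ) ^ (((n:ℝ)-1)/3)
            else (3/4:ℝ) ^ (((n:ℤ)+1-d).toNat)) * 2 ^ (n+1)) := by
    apply Finset.sum_le_sum
    intro d hd
    rw [Finset.mem_Icc] at hd
    exact Nd_real n k hk hn d hd.1 hd.2
  have hsplit := Finset.sum_filter_add_sum_filter_not (Finset.Icc (0:ℤ) b')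
      (fun d => 2*d ≤ (n:ℤ))
      (fun d => (if 2*d ≤ (n:ℤ) then (3/4:ℝ) ^ (((n:ℝ)-1)/3)
            else (3/4:ℝ) ^ (((n:ℤ)+1-d).toNat)) * 2 ^ (n+1))
  have hbucket1 : ∑ d ∈ (Finset.Icc (0:ℤ) b').filter (fun d => 2*d ≤ (n:ℤ)),
        ((if 2*d ≤ (n:ℤ) then (3/4:ℝ) ^ (((n:ℝ)-1)/3)
          else (3/4:ℝ) ^ (((n:ℤ)+1-d).toNat)) * 2 ^ (n+1))
      ≤ (n+1) * (3/4:ℝ) ^ (((n:ℝ)-1)/3) * 2 ^ (n+1) := by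
    have heq : ∀ d ∈ (Finset.Icc (0:ℤ) b').filter (fun d => 2*d ≤ (n:ℤ)),
        ((if 2*d ≤ (n:ℤ) then (3/4:ℝ) ^ (((n:ℝ)-1)/3)
          else (3/4:ℝ) ^ (((n:ℤ)+1-d).toNat)) * 2 ^ (n+1))
        = (3/4:ℝ) ^ (((n:ℝ)-1)/3) * 2 ^ (n+1) := by
      intro d hd
      rw [Finset.mem_filter] at hd
      rw [if_pos hd.2]
    rw [Finset.sum_congr rfl heq, Finset.sum_const, nsmul_eq_mul]
    have hcard : (((Finset.Icc (0:ℤ) b').filter (fun d => 2*d ≤ (n:ℤ))).card : ℝ) ≤ (n:ℝ)+1 := by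
      have hsub : ((Finset.Icc (0:ℤ) b').filter (fun d => 2*d ≤ (n:ℤ)))
          ⊆ Finset.Icc (0:ℤ) ((n/2 : ℕ) : ℤ) := by
        intro d hd
        simp only [Finset.mem_filter, Finset.mem_Icc] at hd
        rw [Finset.mem_Icc]
        omega
      have := Finset.card_le_card hsub
      rw [Int.card_Icc] at this
      have h5 : ((n/2 : ℕ) : ℤ) + 1 - 0 = ((n/2 + 1 : ℕ) : ℤ) := by push_cast; ring
      have h6 : (((n/2 : ℕ) : ℤ) + 1 - 0).toNat = n/2 + 1 := by omega
      rw [h6] at this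
      have h7 : n/2 + 1 ≤ n + 1 := by omega
      have : ((Finset.Icc (0:ℤ) b').filter (fun d => 2*d ≤ (n:ℤ))).card ≤ n + 1 := le_trans this h7
      exact_mod_cast this
    have hpos : (0:ℝ) ≤ (3/4:ℝ) ^ (((n:ℝ)-1)/3) * 2 ^ (n+1) := by positivity
    calc (((Finset.Icc (0:ℤ) b').filter (fun d => 2*d ≤ (n:ℤ))).card : ℝ)
          * ((3/4:ℝ) ^ (((n:ℝ)-1)/3) * 2 ^ (n+1))
        ≤ ((n:ℝ)+1) * ((3/4:ℝ) ^ (((n:ℝ)-1)/3) * 2 ^ (n+1)) :=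
          mul_le_mul_of_nonneg_right hcard hpos
      _ = (n+1) * (3/4:ℝ) ^ (((n:ℝ)-1)/3) * 2 ^ (n+1) := by ring
  have hbucket2 : ∑ d ∈ (Finset.Icc (0:ℤ) b').filter (fun d => ¬ 2*d ≤ (n:ℤ)),
        ((if 2*d ≤ (n:ℤ) then (3/4:ℝ) ^ (((n:ℝ)-1)/3)
          else (3/4:ℝ) ^ (((n:ℤ)+1-d).toNat)) * 2 ^ (n+1))
      ≤ 4 * (3/4:ℝ) ^ (k+2) * 2 ^ (n+1) := by
    have hstep : ∑ d ∈ (Finset.Icc (0:ℤ) b').filter (fun d => ¬ 2*d ≤ (n:ℤ)),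
        ((if 2*d ≤ (n:ℤ) then (3/4:ℝ) ^ (((n:ℝ)-1)/3)
          else (3/4:ℝ) ^ (((n:ℤ)+1-d).toNat)) * 2 ^ (n+1))
        ≤ ∑ d ∈ Finset.Icc (0:ℤ) b',
            ((3/4:ℝ) ^ (((n:ℤ)+1-d).toNat) * 2 ^ (n+1)) := by
      have hsub := Finset.filter_subset (fun d => ¬ 2*d ≤ (n:ℤ)) (Finset.Icc (0:ℤ) b')
      have hterm : ∀ d ∈ (Finset.Icc (0:ℤ) b').filter (fun d => ¬ 2*d ≤ (n:ℤ)),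
          ((if 2*d ≤ (n:ℤ) then (3/4:ℝ) ^ (((n:ℝ)-1)/3)
            else (3/4:ℝ) ^ (((n:ℤ)+1-d).toNat)) * 2 ^ (n+1))
          = (3/4:ℝ) ^ (((n:ℤ)+1-d).toNat) * 2 ^ (n+1) := by
        intro d hd
        rw [Finset.mem_filter] at hd
        rw [if_neg hd.2]
      rw [Finset.sum_congr rfl hterm]
      apply Finset.sum_le_sum_of_subset_of_nonneg hsub
      intro d _ _
      positivity
    refine hstep.trans ?_
    have hterm2 : ∀ d ∈ Finset.Icc (0:ℤ) b',
        (3/4:ℝ) ^ (((n:ℤ)+1-d).toNat) * 2 ^ (n+1)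
        = ((3/4:ℝ) ^ (k+2) * 2 ^ (n+1)) * (3/4:ℝ) ^ ((b' - d).toNat) := by
      intro d hd
      rw [Finset.mem_Icc] at hd
      have he : ((n:ℤ)+1-d).toNat = (k+2) + (b' - d).toNat := by omega
      rw [he, pow_add]
      ring
    rw [Finset.sum_congr rfl hterm2, ← Finset.mul_sum]
    have hgeom := sum_right (3/4:ℝ) (by norm_num) (by norm_num) 0 b'
    calc ((3/4:ℝ) ^ (k+2) * 2 ^ (n+1)) * ∑ d ∈ Finset.Icc (0:ℤ) b', (3/4:ℝ) ^ ((b' - d).toNat)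
        ≤ ((3/4:ℝ) ^ (k+2) * 2 ^ (n+1)) * (1 / (1 - 3/4)) :=
          mul_le_mul_of_nonneg_left hgeom (by positivity)
      _ = 4 * (3/4:ℝ) ^ (k+2) * 2 ^ (n+1) := by norm_num; ring
  have hfinal : (((Finset.Icc (0:ℤ) n).powerset.filter
        (fun S => ¬ Finset.Icc (-(n:ℤ) + k + 1) b' ⊆ S - S)).card : ℝ)
      ≤ (8 * (3/4 : ℝ) ^ (k + 2) + (n + 1) * (3/4 : ℝ) ^ (((n:ℝ) - 1) / 3)) * 2 ^ (n+1) := by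
    have hp1 : (0:ℝ) ≤ (3/4:ℝ) ^ (k+2) * 2 ^ (n+1) := by positivity
    have := le_trans h1 h2
    rw [← hsplit] at this
    have hcomb := this.trans (add_le_add hbucket1 hbucket2)
    nlinarith [hcomb]
  rw [prAll, div_le_iff₀ (by positivity : (0:ℝ) < 2 ^ (n + 1))]
  convert hfinal using 4
  rfl

/-- bounds on the probability of a missing middle sum or difference, for a
uniform random `S ⊆ [0,n]`. -/
theorem missing_middle_prob (n k : ℕ) (hk : 0 < k) (hn : 2 * k < n) :
    prAll n (fun S => ¬ Finset.Icc ((k:ℤ) + 1) (2 * (n:ℤ) - k - 1) ⊆ S + S)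
      ≤ 3 * (3/4 : ℝ) ^ ((k:ℝ) / 2) / (2 - Real.sqrt 3) ∧
    prAll n (fun S => ¬ Finset.Icc (-(n:ℤ) + k + 1) ((n:ℤ) - k - 1) ⊆ S - S)
      ≤ 8 * (3/4 : ℝ) ^ (k + 2) + (n + 1) * (3/4 : ℝ) ^ (((n:ℝ) - 1) / 3) := by
  exact ⟨sums_part n k hk hn, diff_part n k hk hn⟩
end

section
/- Let k < h < j be integers and A ⊆ [0,k]. Let 𝓑_h(A; k) denote the set of all B ⊆ [0,h] satisfying B ∩ [0,k] = A and [k+1, h] ⊆ B+B. Then G_j(A; k) = Σ_{B ∈ 𝓑_h(A;k)} G_j(B; h). -/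
open Finset Filter Pointwise
open scoped Classical

/-- `G_j(A;k) = Σ_{B ∈ 𝓑_h(A;k)} G_j(B;h)` for `k < h < j`. -/
theorem G_decompose (k h j : ℕ) (hkh : k < h) (hhj : h < j)
    (A : Finset ℤ) (hA : A ⊆ Finset.Icc (0:ℤ) k) :
    G A k j =
      ∑ B ∈ (Finset.Icc (0:ℤ) h).powerset.filter
          (fun B => B ∩ Finset.Icc (0:ℤ) k = A ∧ Finset.Icc ((k:ℤ) + 1) h ⊆ B + B),
        G B h j := by
  classical
  set s := (Finset.Icc (0:ℤ) j).powerset.filter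
      (fun T => T ∩ Finset.Icc (0:ℤ) k = A ∧
        Finset.Icc ((k:ℤ) + 1) ((j:ℤ) - 1) ⊆ T + T ∧ (j:ℤ) ∉ T + T) with hs
  set t := (Finset.Icc (0:ℤ) h).powerset.filter
      (fun B => B ∩ Finset.Icc (0:ℤ) k = A ∧ Finset.Icc ((k:ℤ) + 1) h ⊆ B + B) with ht
  have hIcc : Finset.Icc (0:ℤ) (h:ℤ) ∩ Finset.Icc (0:ℤ) (k:ℤ) = Finset.Icc (0:ℤ) (k:ℤ) := by
    ext x; simp only [Finset.mem_inter, Finset.mem_Icc]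
    constructor
    · rintro ⟨-, hx⟩; exact hx
    · rintro ⟨h0, hk⟩
      exact ⟨⟨h0, hk.trans (by exact_mod_cast hkh.le)⟩, h0, hk⟩
  have hmap : ∀ T ∈ s, T ∩ Finset.Icc (0:ℤ) h ∈ t := by
    intro T hT
    simp only [hs, Finset.mem_filter, Finset.mem_powerset] at hT
    obtain ⟨hTsub, hTk, hTsum, -⟩ := hT
    simp only [ht, Finset.mem_filter, Finset.mem_powerset]
    refine ⟨Finset.inter_subset_right, ?_, ?_⟩
    · rw [Finset.inter_assoc, hIcc]; exact hTk
    · intro x hx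
      rw [Finset.mem_Icc] at hx
      have hxT : x ∈ T + T := by
        apply hTsum
        rw [Finset.mem_Icc]
        refine ⟨hx.1, hx.2.trans ?_⟩
        have : (h:ℤ) < j := by exact_mod_cast hhj
        omega
      rw [Finset.mem_add] at hxT ⊢
      obtain ⟨a, ha, b, hb, hab⟩ := hxT
      have haI := hTsub ha
      have hbI := hTsub hb
      rw [Finset.mem_Icc] at haI hbI
      refine ⟨a, ?_, b, ?_, hab⟩ <;> rw [Finset.mem_inter, Finset.mem_Icc]
      · exact ⟨ha, haI.1, by omega⟩
      · exact ⟨hb, hbI.1, by omega⟩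
  have hcard := Finset.card_eq_sum_card_fiberwise hmap
  have : G A k j = s.card := rfl
  rw [this, hcard]
  refine Finset.sum_congr rfl ?_
  intro B hB
  simp only [ht, Finset.mem_filter, Finset.mem_powerset] at hB
  obtain ⟨hBsub, hBk, hBsum⟩ := hB
  unfold G
  congr 1
  ext T
  simp only [hs, Finset.mem_filter, Finset.mem_powerset]
  constructor
  · rintro ⟨⟨hTsub, hTk, hTsum, hTj⟩, hfib⟩
    refine ⟨hTsub, hfib, ?_, hTj⟩
    intro x hx
    apply hTsum
    rw [Finset.mem_Icc] at hx ⊢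
    have : (k:ℤ) < h := by exact_mod_cast hkh
    omega
  · rintro ⟨hTsub, hTh, hTsum, hTj⟩
    have hBT : B ⊆ T := by rw [← hTh]; exact Finset.inter_subset_left
    refine ⟨⟨hTsub, ?_, ?_, hTj⟩, hTh⟩
    · rw [← hIcc, ← Finset.inter_assoc, hTh]; exact hBk
    · intro x hx
      rw [Finset.mem_Icc] at hx
      by_cases hxh : x ≤ (h:ℤ)
      · have : x ∈ B + B := hBsum (by rw [Finset.mem_Icc]; exact ⟨hx.1, hxh⟩)
        exact Finset.add_subset_add hBT hBT this
      · exact hTsum (by rw [Finset.mem_Icc]; omega)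
end
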